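/- arXiv:2502.07290 — 7 statements merged into one kernel-verified Lean document; each statement's English description precedes it below -/
import Mathlib

section
/- Let 0 < α ≤ 1 and let z be a real number with z > 1. Then ∑_{n=0}^{∞} Γ(2n+α)/(Γ(α)·Γ(2n+1))·z^{−n} = ((1+z^{−1/2})^{−α} + (1−z^{−1/2})^{−α})/2, where all powers are real powers. -/
open Real
noncomputable def bcoef (α : ℝ) (n : ℕ) : ℝ :=
  Real.Gamma (n + α) / (Real.Gamma α * Real.Gamma (n + 1))

lemma bcoef_zero {α : ℝ} (hα : 0 < α) : bcoef α 0 = 1 := by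
  simp [bcoef, Real.Gamma_one, (Real.Gamma_pos_of_pos hα).ne']

lemma bcoef_pos {α : ℝ} (hα : 0 < α) (n : ℕ) : 0 < bcoef α n := by
  have h1 : 0 < Real.Gamma ((n:ℝ) + α) := Real.Gamma_pos_of_pos (by positivity)
  have h3 : 0 < Real.Gamma ((n:ℝ) + 1) := Real.Gamma_pos_of_pos (by positivity)
  exact div_pos h1 (mul_pos (Real.Gamma_pos_of_pos hα) h3)

lemma bcoef_succ {α : ℝ} (hα : 0 < α) (n : ℕ) :
    bcoef α (n + 1) = ((n:ℝ) + α) / ((n:ℝ) + 1) * bcoef α n := by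
  have hn : (0:ℝ) < (n:ℝ) + α := by positivity
  have hn1 : (0:ℝ) < (n:ℝ) + 1 := by positivity
  have hG : Real.Gamma ((n:ℝ) + α + 1) = ((n:ℝ) + α) * Real.Gamma ((n:ℝ) + α) :=
    Real.Gamma_add_one hn.ne'
  have hG2 : Real.Gamma ((n:ℝ) + 1 + 1) = ((n:ℝ) + 1) * Real.Gamma ((n:ℝ) + 1) :=
    Real.Gamma_add_one hn1.ne'
  have hGa : Real.Gamma α ≠ 0 := (Real.Gamma_pos_of_pos hα).ne'
  have hGn1 : Real.Gamma ((n:ℝ) + 1) ≠ 0 := (Real.Gamma_pos_of_pos hn1).ne'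
  unfold bcoef
  push_cast
  rw [show (n:ℝ) + 1 + α = (n:ℝ) + α + 1 by ring, hG, hG2]
  field_simp

lemma bcoef_le_one {α : ℝ} (hα : 0 < α) (hα' : α ≤ 1) (n : ℕ) : bcoef α n ≤ 1 := by
  induction n with
  | zero => rw [bcoef_zero hα]
  | succ n ih =>
    rw [bcoef_succ hα n]
    have h1 : ((n:ℝ) + α) / ((n:ℝ) + 1) ≤ 1 := by
      apply div_le_one_of_le₀ (by linarith) (by positivity)
    have h2 : 0 ≤ ((n:ℝ) + α) / ((n:ℝ) + 1) := by positivity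
    calc ((n:ℝ) + α) / ((n:ℝ) + 1) * bcoef α n ≤ 1 * 1 :=
      mul_le_mul h1 ih (bcoef_pos hα n).le one_pos.le
    _ = 1 := by ring

lemma summable_linear_geom {r : ℝ} (hr : |r| < 1) :
    Summable (fun n : ℕ => ((n:ℝ) + 1) * |r| ^ n) := by
  have h1 : Summable (fun n : ℕ => (n:ℝ) ^ 1 * |r| ^ n) :=
    summable_pow_mul_geometric_of_norm_lt_one 1 (by rwa [Real.norm_eq_abs, abs_abs])
  have h2 : Summable (fun n : ℕ => |r| ^ n) := summable_geometric_of_lt_one (abs_nonneg r) hr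
  simpa [add_mul, pow_one] using h1.add h2

lemma summable_bcoef_mul {α : ℝ} (hα : 0 < α) (hα' : α ≤ 1) {x : ℝ} (hx : |x| < 1) :
    Summable (fun n : ℕ => bcoef α n * x ^ n) := by
  apply Summable.of_norm_bounded (summable_linear_geom hx)
  intro n
  rw [Real.norm_eq_abs, abs_mul, abs_pow]
  have h1 : |bcoef α n| ≤ 1 := by
    rw [abs_of_pos (bcoef_pos hα n)]; exact bcoef_le_one hα hα' n
  have h2 : (1:ℝ) ≤ (n:ℝ) + 1 := by have := Nat.cast_nonneg (α := ℝ) n; linarith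
  nlinarith [abs_nonneg (bcoef α n), pow_nonneg (abs_nonneg x) n]

lemma summable_deriv_bcoef {α : ℝ} (hα : 0 < α) (hα' : α ≤ 1) {x r : ℝ} (hr : 0 < r)
    (hr1 : r < 1) (hx : |x| ≤ r) :
    Summable (fun n : ℕ => bcoef α n * ((n:ℝ) * x ^ (n - 1))) := by
  have hu : Summable (fun n : ℕ => (n:ℝ) * r ^ (n - 1)) := by
    rw [← summable_nat_add_iff 1]
    apply Summable.of_norm_bounded (summable_linear_geom (by rwa [abs_of_pos hr]))
    intro n
    simp only [Nat.add_sub_cancel, Real.norm_eq_abs, Nat.cast_add, Nat.cast_one]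
    rw [abs_mul, abs_pow, abs_of_pos hr, abs_of_nonneg (by positivity : (0:ℝ) ≤ (n:ℝ)+1)]
  apply Summable.of_norm_bounded hu
  intro n
  rw [Real.norm_eq_abs, abs_mul, abs_mul, abs_pow]
  have h1 : |bcoef α n| ≤ 1 := by
    rw [abs_of_pos (bcoef_pos hα n)]; exact bcoef_le_one hα hα' n
  have h2 : |x| ^ (n-1) ≤ r ^ (n-1) := pow_le_pow_left₀ (abs_nonneg x) hx _
  have h3 : |(n:ℝ)| = (n:ℝ) := abs_of_nonneg (Nat.cast_nonneg n)
  rw [h3]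
  have hn0 : (0:ℝ) ≤ (n:ℝ) := Nat.cast_nonneg n
  calc |bcoef α n| * ((n:ℝ) * |x| ^ (n-1)) ≤ 1 * ((n:ℝ) * r ^ (n-1)) := by
        apply mul_le_mul h1 _ (by positivity) one_pos.le
        exact mul_le_mul_of_nonneg_left h2 hn0
    _ = (n:ℝ) * r ^ (n-1) := one_mul _

lemma hasDerivAt_bsum {α : ℝ} (hα : 0 < α) (hα' : α ≤ 1) {y : ℝ} (hy : |y| < 1) :
    HasDerivAt (fun w => ∑' n : ℕ, bcoef α n * w ^ n)
      (∑' n : ℕ, bcoef α n * ((n:ℝ) * y ^ (n - 1))) y := by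
  set r := (|y| + 1) / 2 with hrdef
  have hy0 : 0 ≤ |y| := abs_nonneg y
  have hr0 : 0 < r := by rw [hrdef]; linarith
  have hr1 : r < 1 := by rw [hrdef]; linarith
  have hyr : |y| < r := by rw [hrdef]; linarith
  have hu : Summable (fun n : ℕ => (n:ℝ) * r ^ (n - 1)) := by
    rw [← summable_nat_add_iff 1]
    apply Summable.of_norm_bounded (summable_linear_geom (by rwa [abs_of_pos hr0]))
    intro n
    simp only [Nat.add_sub_cancel, Real.norm_eq_abs, Nat.cast_add, Nat.cast_one]
    rw [abs_mul, abs_pow, abs_of_pos hr0, abs_of_nonneg (by positivity : (0:ℝ) ≤ (n:ℝ)+1)]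
  refine hasDerivAt_tsum_of_isPreconnected hu isOpen_Ioo
    (convex_Ioo (-r) r).isPreconnected
    (g := fun n w => bcoef α n * w ^ n)
    (g' := fun n w => bcoef α n * ((n:ℝ) * w ^ (n - 1)))
    (fun n w _ => (hasDerivAt_pow n w).const_mul (bcoef α n))
    ?_ (y₀ := 0) ?_ ?_ ?_
  · intro n w hw
    have hwr : |w| ≤ r := le_of_lt (abs_lt.mpr ⟨hw.1, hw.2⟩)
    rw [Real.norm_eq_abs, abs_mul, abs_mul, abs_pow,
      abs_of_nonneg (Nat.cast_nonneg (α := ℝ) n)]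
    have h1 : |bcoef α n| ≤ 1 := by
      rw [abs_of_pos (bcoef_pos hα n)]; exact bcoef_le_one hα hα' n
    have h2 : |w| ^ (n-1) ≤ r ^ (n-1) := pow_le_pow_left₀ (abs_nonneg w) hwr _
    have hn0 : (0:ℝ) ≤ (n:ℝ) := Nat.cast_nonneg n
    calc |bcoef α n| * ((n:ℝ) * |w| ^ (n-1)) ≤ 1 * ((n:ℝ) * r ^ (n-1)) := by
          apply mul_le_mul h1 _ (by positivity) one_pos.le
          exact mul_le_mul_of_nonneg_left h2 hn0
      _ = (n:ℝ) * r ^ (n-1) := one_mul _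
  · exact ⟨by linarith, by linarith⟩
  · exact summable_bcoef_mul hα hα' (by simp)
  · exact abs_lt.mp hyr

lemma feq_bsum {α : ℝ} (hα : 0 < α) (hα' : α ≤ 1) {y : ℝ} (hy : |y| < 1) :
    (1 - y) * (∑' n : ℕ, bcoef α n * ((n:ℝ) * y ^ (n - 1)))
      = α * ∑' n : ℕ, bcoef α n * y ^ n := by
  have hy0 : 0 ≤ |y| := abs_nonneg y
  have hSd : Summable (fun n : ℕ => bcoef α n * ((n:ℝ) * y ^ (n - 1))) :=
    summable_deriv_bcoef hα hα' (r := (|y| + 1) / 2) (by linarith) (by linarith) (by linarith)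
  have hbd : ∀ (a : ℝ) (n : ℕ), 0 ≤ a → a ≤ 1 →
      ‖((n:ℝ) + a) * bcoef α n * y ^ n‖ ≤ ((n:ℝ) + 1) * |y| ^ n := by
    intro a n ha ha1
    rw [Real.norm_eq_abs, abs_mul, abs_mul, abs_pow]
    have hn0 : (0:ℝ) ≤ (n:ℝ) := Nat.cast_nonneg n
    have h0 : |(n:ℝ) + a| ≤ (n:ℝ) + 1 := by rw [abs_of_nonneg (by linarith)]; linarith
    have h1 : |bcoef α n| ≤ 1 := by
      rw [abs_of_pos (bcoef_pos hα n)]; exact bcoef_le_one hα hα' n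
    have h2 : (0:ℝ) ≤ |y| ^ n := pow_nonneg (abs_nonneg y) n
    calc |(n:ℝ) + a| * |bcoef α n| * |y| ^ n ≤ (((n:ℝ) + 1) * 1) * |y| ^ n := by
          apply mul_le_mul_of_nonneg_right _ h2
          exact mul_le_mul h0 h1 (abs_nonneg _) (by linarith)
      _ = ((n:ℝ) + 1) * |y| ^ n := by ring
  have hsumT : Summable (fun n : ℕ => ((n:ℝ) + α) * bcoef α n * y ^ n) :=
    Summable.of_norm_bounded (summable_linear_geom hy) (fun n => hbd α n hα.le hα')
  have hsumN : Summable (fun n : ℕ => (n:ℝ) * bcoef α n * y ^ n) := by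
    have := Summable.of_norm_bounded (summable_linear_geom hy)
      (fun n => hbd 0 n le_rfl zero_le_one)
    simpa using this
  have hsumF : Summable (fun n : ℕ => bcoef α n * y ^ n) := summable_bcoef_mul hα hα' hy
  have key : ∀ n : ℕ, bcoef α (n+1) * ((n:ℝ) + 1) = ((n:ℝ) + α) * bcoef α n := by
    intro n
    rw [bcoef_succ hα n]
    have hn1 : ((n:ℝ) + 1) ≠ 0 := by positivity
    field_simp
  have hD : (∑' n : ℕ, bcoef α n * ((n:ℝ) * y ^ (n - 1)))
      = ∑' n : ℕ, ((n:ℝ) + α) * bcoef α n * y ^ n := by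
    rw [Summable.tsum_eq_zero_add hSd]
    simp only [Nat.cast_zero, zero_mul, mul_zero, zero_add, Nat.cast_add, Nat.cast_one,
      Nat.add_sub_cancel]
    apply tsum_congr
    intro n
    linear_combination (y ^ n) * key n
  have hN : (∑' n : ℕ, (n:ℝ) * bcoef α n * y ^ n)
      = y * ∑' n : ℕ, ((n:ℝ) + α) * bcoef α n * y ^ n := by
    rw [Summable.tsum_eq_zero_add hsumN, ← tsum_mul_left]
    simp only [Nat.cast_zero, zero_mul, Nat.cast_add, Nat.cast_one]
    rw [zero_add]
    apply tsum_congr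
    intro n
    rw [pow_succ]
    linear_combination (y ^ n * y) * key n
  have hsplit : (∑' n : ℕ, ((n:ℝ) + α) * bcoef α n * y ^ n)
      = (∑' n : ℕ, (n:ℝ) * bcoef α n * y ^ n) + α * ∑' n : ℕ, bcoef α n * y ^ n := by
    rw [← tsum_mul_left, ← Summable.tsum_add hsumN (hsumF.mul_left α)]
    apply tsum_congr
    intro n
    ring
  rw [hD]
  linear_combination hsplit + hN

lemma hasSum_bcoef {α : ℝ} (hα : 0 < α) (hα' : α ≤ 1) {x : ℝ} (hx : |x| < 1) :
    HasSum (fun n : ℕ => bcoef α n * x ^ n) ((1 - x) ^ (-α)) := by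
  set f : ℝ → ℝ := fun w => ∑' n : ℕ, bcoef α n * w ^ n with hf
  have key : ∀ w ∈ Set.Ioo (-1:ℝ) 1, HasDerivAt (fun u => f u * (1 - u) ^ α) 0 w := by
    intro w hw
    have hw' : |w| < 1 := abs_lt.mpr ⟨hw.1, hw.2⟩
    have h1w : (0:ℝ) < 1 - w := by linarith [hw.2]
    have hfd : HasDerivAt f (∑' n : ℕ, bcoef α n * ((n:ℝ) * w ^ (n - 1))) w :=
      hasDerivAt_bsum hα hα' hw'
    have hlin : HasDerivAt (fun u : ℝ => 1 - u) (-1) w := (hasDerivAt_id w).const_sub 1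
    have hrd : HasDerivAt (fun u : ℝ => (1 - u) ^ α) (α * (1 - w) ^ (α - 1) * (-1)) w := by
      have := (Real.hasDerivAt_rpow_const (x := 1 - w) (p := α) (Or.inl h1w.ne')).comp w hlin
      exact this
    have hmul := hfd.mul hrd
    refine hmul.congr_deriv (Eq.symm ?_)
    have hsplit : (1 - w) ^ α = (1 - w) ^ (α - 1) * (1 - w) := by
      rw [← Real.rpow_add_one h1w.ne' (α - 1)]
      norm_num
    have hfe := feq_bsum hα hα' hw'
    rw [hsplit]
    linear_combination (-(1 - w) ^ (α - 1)) * hfe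
  have h0mem : (0:ℝ) ∈ Set.Ioo (-1:ℝ) 1 := by constructor <;> norm_num
  have hxmem : x ∈ Set.Ioo (-1:ℝ) 1 := ⟨(abs_lt.mp hx).1, (abs_lt.mp hx).2⟩
  have hconst : f x * (1 - x) ^ α = f 0 * (1 - 0) ^ α := by
    have hmvt := Convex.norm_image_sub_le_of_norm_hasDerivWithin_le
      (f := fun u => f u * (1 - u) ^ α) (f' := fun _ => (0:ℝ)) (C := 0)
      (fun w hw => (key w hw).hasDerivWithinAt) (fun w _ => by simp)
      (convex_Ioo (-1:ℝ) 1) h0mem hxmem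
    simp only [zero_mul] at hmvt
    have := norm_sub_eq_zero_iff.mp (le_antisymm hmvt (norm_nonneg _))
    exact this
  have hf0 : f 0 = 1 := by
    rw [hf]
    simp only
    rw [tsum_eq_single 0 (fun n hn => by simp [zero_pow hn])]
    simp [bcoef_zero hα]
  have h1x : (0:ℝ) < 1 - x := by linarith [hxmem.2]
  have hne : (1 - x) ^ α ≠ 0 := (Real.rpow_pos_of_pos h1x α).ne'
  have hval : f x = (1 - x) ^ (-α) := by
    have h1 : f x * (1 - x) ^ α = 1 := by
      rw [hconst, hf0]; norm_num
    rw [Real.rpow_neg h1x.le]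
    exact eq_inv_of_mul_eq_one_left h1
  have hs := (summable_bcoef_mul hα hα' hx).hasSum
  rwa [show (∑' n : ℕ, bcoef α n * x ^ n) = (1 - x) ^ (-α) from hval] at hs

/-- Z-transform of the even-indexed binomial subsequence `n ↦ φ̃_α(2n)`:
for `0 < α ≤ 1` and `z > 1`,
`∑ₙ Γ(2n+α)/(Γ(α)·Γ(2n+1))·z^(-n) = ((1+z^(-1/2))^(-α) + (1-z^(-1/2))^(-α))/2`. -/
theorem ztransform_phi_even (α : ℝ) (hα : 0 < α) (hα' : α ≤ 1) (z : ℝ) (hz : 1 < z) :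
    ∑' n : ℕ, Real.Gamma (2 * (n : ℝ) + α) /
        (Real.Gamma α * Real.Gamma (2 * (n : ℝ) + 1)) * z ^ (-(n : ℝ))
      = ((1 + z ^ (-(1 / 2 : ℝ))) ^ (-α) + (1 - z ^ (-(1 / 2 : ℝ))) ^ (-α)) / 2 := by
  have hz0 : (0:ℝ) < z := lt_trans one_pos hz
  set x : ℝ := z ^ (-(1 / 2 : ℝ)) with hxdef
  have hx0 : 0 < x := Real.rpow_pos_of_pos hz0 _
  have hx1 : x < 1 := Real.rpow_lt_one_of_one_lt_of_neg hz (by norm_num)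
  have hxa : |x| < 1 := by rw [abs_of_pos hx0]; exact hx1
  have hxna : |(-x)| < 1 := by rwa [abs_neg]
  have h1 := hasSum_bcoef hα hα' hxa
  have h2 := hasSum_bcoef hα hα' hxna
  rw [sub_neg_eq_add] at h2
  have hadd := h1.add h2
  have hinj : Function.Injective (fun n : ℕ => 2 * n) := fun a b h => by simpa using h
  have hzero : ∀ k : ℕ, k ∉ Set.range (fun n : ℕ => 2 * n) →
      bcoef α k * x ^ k + bcoef α k * (-x) ^ k = 0 := by
    intro k hk
    have hodd : Odd k := by
      rcases Nat.even_or_odd k with he | ho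
      · obtain ⟨r, hr⟩ := he
        exact absurd (⟨r, show 2 * r = k by omega⟩ : k ∈ Set.range (fun n : ℕ => 2 * n)) hk
      · exact ho
    rw [hodd.neg_pow]
    ring
  have heven := (Function.Injective.hasSum_iff hinj hzero).mpr hadd
  have heven2 : HasSum (fun n : ℕ => bcoef α (2*n) * x ^ (2*n))
      (((1 - x) ^ (-α) + (1 + x) ^ (-α)) / 2) := by
    have hdiv := heven.div_const 2
    convert hdiv using 2 with n
    ext n
    show bcoef α (2 * n) * x ^ (2 * n) = (bcoef α (2 * n) * x ^ (2 * n) + bcoef α (2 * n) * (-x) ^ (2 * n)) / 2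
    rw [Even.neg_pow ⟨n, by ring⟩]
    ring
    rfl
  have hterm : ∀ n : ℕ, Real.Gamma (2 * (n : ℝ) + α) /
        (Real.Gamma α * Real.Gamma (2 * (n : ℝ) + 1)) * z ^ (-(n : ℝ))
      = bcoef α (2*n) * x ^ (2*n) := by
    intro n
    have hc : bcoef α (2*n)
        = Real.Gamma (2*(n:ℝ)+α) / (Real.Gamma α * Real.Gamma (2*(n:ℝ)+1)) := by
      unfold bcoef
      push_cast
      ring_nf
    have hxpow : x ^ (2*n) = z ^ (-(n:ℝ)) := by
      rw [← Real.rpow_natCast x (2*n), hxdef, ← Real.rpow_mul hz0.le]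
      congr 1
      push_cast
      ring
    rw [hc, hxpow]
  rw [tsum_congr hterm, heven2.tsum_eq]
  ring
end

section
/- Let 0 < α ≤ 1 and let z be a real number with z > 1. Then ∑_{n=0}^{∞} Γ(2n+1+α)/(Γ(α)·Γ(2n+2))·z^{−n} = (z^{1/2}/2)·((1−z^{−1/2})^{−α} − (1+z^{−1/2})^{−α}), where all powers are real powers. -/
open Real Set

noncomputable def binc (α : ℝ) (n : ℕ) : ℝ :=
  Real.Gamma (n + α) / (Real.Gamma α * Real.Gamma (n + 1))

lemma binc_zero (α : ℝ) (hα : 0 < α) : binc α 0 = 1 := by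
  have h := Real.Gamma_pos_of_pos hα
  simp [binc, Real.Gamma_one, h.ne']

lemma binc_succ (α : ℝ) (hα : 0 < α) (n : ℕ) :
    binc α (n + 1) = (n + α) / (n + 1) * binc α n := by
  have hna : ((n : ℝ) + α) ≠ 0 := by positivity
  have hn1 : ((n : ℝ) + 1) ≠ 0 := by positivity
  have h1 : Real.Gamma (((n : ℕ) + 1 : ℕ) + α) = (n + α) * Real.Gamma (n + α) := by
    push_cast
    rw [show ((n : ℝ) + 1 + α) = ((n : ℝ) + α) + 1 by ring, Real.Gamma_add_one hna]
  have h2 : Real.Gamma ((((n : ℕ) + 1 : ℕ) : ℝ) + 1) = (n + 1) * Real.Gamma (n + 1) := by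
    push_cast
    rw [show ((n : ℝ) + 1 + 1) = ((n : ℝ) + 1) + 1 by ring, Real.Gamma_add_one hn1]
  have hΓ1 : Real.Gamma ((n : ℝ) + 1) ≠ 0 := by
    have : (0 : ℝ) < (n : ℝ) + 1 := by positivity
    exact (Real.Gamma_pos_of_pos this).ne'
  have hΓα : Real.Gamma α ≠ 0 := (Real.Gamma_pos_of_pos hα).ne'
  simp only [binc, h1, h2]
  field_simp

lemma binc_pos (α : ℝ) (hα : 0 < α) (n : ℕ) : 0 < binc α n := by
  have h1 : (0:ℝ) < Real.Gamma ((n : ℝ) + α) := Real.Gamma_pos_of_pos (by positivity)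
  have h2 : (0:ℝ) < Real.Gamma ((n : ℝ) + 1) := Real.Gamma_pos_of_pos (by positivity)
  have h3 : (0:ℝ) < Real.Gamma α := Real.Gamma_pos_of_pos hα
  exact div_pos h1 (mul_pos h3 h2)

lemma binc_le_one (α : ℝ) (hα : 0 < α) (hα' : α ≤ 1) (n : ℕ) : binc α n ≤ 1 := by
  induction n with
  | zero => rw [binc_zero α hα]
  | succ n ih =>
      rw [binc_succ α hα]
      have h1 : ((n : ℝ) + α) / (n + 1) ≤ 1 := by
        apply div_le_one_of_le₀ (by linarith) (by positivity)
      calc ((n:ℝ) + α) / (n + 1) * binc α n ≤ 1 * 1 := by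
            apply mul_le_mul h1 ih (binc_pos α hα n).le (by norm_num)
        _ = 1 := by norm_num

lemma binc_abs_le_one (α : ℝ) (hα : 0 < α) (hα' : α ≤ 1) (n : ℕ) : |binc α n| ≤ 1 := by
  rw [abs_of_pos (binc_pos α hα n)]; exact binc_le_one α hα hα' n

lemma binc_summable (α : ℝ) (hα : 0 < α) (hα' : α ≤ 1) {w : ℝ} (hw : |w| < 1) :
    Summable (fun n => binc α n * w ^ n) := by
  apply Summable.of_norm_bounded
    (summable_geometric_of_lt_one (abs_nonneg w) hw)
  intro n
  rw [norm_mul, norm_pow]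
  calc ‖binc α n‖ * |w| ^ n ≤ 1 * |w| ^ n := by
        apply mul_le_mul_of_nonneg_right (binc_abs_le_one α hα hα' n) (by positivity)
    _ = |w| ^ n := one_mul _

lemma binc_hasSum (α : ℝ) (hα : 0 < α) (hα' : α ≤ 1) {y : ℝ} (hy : |y| < 1) :
    HasSum (fun n => binc α n * y ^ n) ((1 - y) ^ (-α)) := by
  set s := |y| with hs
  set r := (1 + s) / 2 with hrdef
  have hs0 : 0 ≤ s := abs_nonneg y
  have hsr : s < r := by rw [hrdef]; linarith
  have hr1 : r < 1 := by rw [hrdef]; linarith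
  have hr0 : 0 < r := by rw [hrdef]; linarith
  set t : Set ℝ := Ioo (-r) r with htdef
  -- summable bound for the derivative series
  set u : ℕ → ℝ := fun n => (n : ℝ) * r ^ (n - 1) with hudef
  have hu : Summable u := by
    have h1 : Summable (fun n : ℕ => (n : ℝ) ^ 1 * r ^ n) :=
      summable_pow_mul_geometric_of_norm_lt_one 1 (by rwa [Real.norm_eq_abs, abs_of_pos hr0])
    have h2 := h1.mul_left (1 / r)
    apply h2.congr
    intro n
    cases n with
    | zero => simp [hudef]
    | succ m =>
        simp only [hudef]
        rw [Nat.add_sub_cancel, pow_succ]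
        field_simp
        ring
  -- the functions and derivatives
  set g : ℕ → ℝ → ℝ := fun n w => binc α n * w ^ n with hgdef
  set g' : ℕ → ℝ → ℝ := fun n w => binc α n * ((n : ℝ) * w ^ (n - 1)) with hg'def
  have hg : ∀ n w, HasDerivAt (g n) (g' n w) w := fun n w =>
    (hasDerivAt_pow n w).const_mul (binc α n)
  have hbound : ∀ n (w : ℝ), w ∈ t → ‖g' n w‖ ≤ u n := by
    intro n w hw
    have hwr : |w| ≤ r := by
      rw [abs_le]; exact ⟨hw.1.le, hw.2.le⟩
    simp only [hg'def, hudef, norm_mul, Real.norm_eq_abs, norm_pow]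
    rw [abs_of_nonneg (Nat.cast_nonneg n : (0:ℝ) ≤ n)]
    calc |binc α n| * ((n : ℝ) * |w| ^ (n - 1)) ≤ 1 * ((n : ℝ) * r ^ (n - 1)) := by
          apply mul_le_mul (binc_abs_le_one α hα hα' n)
          · exact mul_le_mul_of_nonneg_left (pow_le_pow_left₀ (abs_nonneg w) hwr _)
              (Nat.cast_nonneg n)
          · positivity
          · norm_num
      _ = (n : ℝ) * r ^ (n - 1) := one_mul _
  have h0t : (0 : ℝ) ∈ t := by constructor <;> [linarith; linarith]
  have hsum0 : Summable (fun n => g n 0) :=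
    binc_summable α hα hα' (by rw [abs_zero]; norm_num)
  -- derivative of F on t
  set F : ℝ → ℝ := fun w => ∑' n, g n w with hFdef
  have hF' : ∀ w ∈ t, HasDerivAt F (∑' n, g' n w) w := by
    intro w hw
    exact hasDerivAt_tsum_of_isPreconnected hu isOpen_Ioo (isPreconnected_Ioo)
      (fun n y _ => hg n y) hbound h0t hsum0 hw
  -- summability facts on t
  have hwabs : ∀ w : ℝ, w ∈ t → |w| < 1 := by
    intro w hw
    rw [abs_lt]; exact ⟨by linarith [hw.1], by linarith [hw.2]⟩
  have hsum_g' : ∀ w ∈ t, Summable (fun n => g' n w) := by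
    intro w hw
    exact Summable.of_norm_bounded hu (fun n => hbound n w hw)
  -- the key ODE identity : (1-w) * S1 = α * F w
  -- the key ODE identity : (1-w) * S1 = α * F w
  have key : ∀ w ∈ t, (1 - w) * (∑' n, g' n w) = α * F w := by
    intro w hw
    have hsg' := hsum_g' w hw
    have hterm : ∀ n : ℕ, g' (n + 1) w = ((n : ℝ) + α) * (binc α n * w ^ n) := by
      intro n
      simp only [hg'def]
      rw [binc_succ α hα n, Nat.add_sub_cancel]
      have hn1 : ((n : ℝ) + 1) ≠ 0 := by positivity
      push_cast
      field_simp
    have hshift : (∑' n, g' n w) = ∑' n : ℕ, ((n : ℝ) + α) * (binc α n * w ^ n) := by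
      rw [Summable.tsum_eq_zero_add hsg']
      have h0 : g' 0 w = 0 := by simp [hg'def]
      rw [h0, zero_add]
      exact tsum_congr hterm
    have hsum_shift : Summable (fun n : ℕ => ((n : ℝ) + α) * (binc α n * w ^ n)) :=
      (((summable_nat_add_iff 1).mpr hsg').congr hterm)
    have hsumb : Summable (fun n => binc α n * w ^ n) := binc_summable α hα hα' (hwabs w hw)
    have hsum_n : Summable (fun n : ℕ => (n : ℝ) * (binc α n * w ^ n)) := by
      have := hsum_shift.sub (hsumb.mul_left α)
      apply this.congr
      intro n
      ring
    have hws : w * (∑' n, g' n w) = ∑' n : ℕ, (n : ℝ) * (binc α n * w ^ n) := by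
      rw [← tsum_mul_left]
      apply tsum_congr
      intro n
      cases n with
      | zero => simp [hg'def]
      | succ m =>
          simp only [hg'def, Nat.add_sub_cancel]
          push_cast
          rw [pow_succ]
          ring
    have : (1 - w) * (∑' n, g' n w) = (∑' n, g' n w) - w * (∑' n, g' n w) := by ring
    rw [this, hws, hshift, ← Summable.tsum_sub hsum_shift hsum_n]
    have : α * F w = ∑' n : ℕ, α * (binc α n * w ^ n) := by
      rw [hFdef]; exact (tsum_mul_left).symm
    rw [this]
    apply tsum_congr
    intro n
    ring
  -- G = (1-w)^α * F w has zero derivative on t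
  have hGderiv : ∀ w ∈ t, HasDerivAt (fun w => (1 - w) ^ α * F w) 0 w := by
    intro w hw
    have h1w : (0:ℝ) < 1 - w := by linarith [hw.2]
    have hd1 : HasDerivAt (fun w : ℝ => 1 - w) (-1) w := (hasDerivAt_id w).const_sub 1
    have hd2 : HasDerivAt (fun w : ℝ => (1 - w) ^ α) (-1 * α * (1 - w) ^ (α - 1)) w :=
      hd1.rpow_const (Or.inl h1w.ne')
    have hd3 : HasDerivAt (fun w => (1 - w) ^ α * F w)
        (-1 * α * (1 - w) ^ (α - 1) * F w + (1 - w) ^ α * ∑' n, g' n w) w := hd2.mul (hF' w hw)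
    convert hd3 using 1
    have hsplit : (1 - w) ^ α = (1 - w) ^ (α - 1) * (1 - w) := by
      rw [← Real.rpow_add_one h1w.ne' (α - 1)]
      norm_num
    rw [hsplit]
    have hk := key w hw
    linear_combination (-(1 - w) ^ (α - 1)) * hk
  -- constancy on Icc (-s) s
  have hsub : Icc (-s) s ⊆ t := fun x hx => ⟨by linarith [hx.1], by linarith [hx.2]⟩
  have hconst := constant_of_has_deriv_right_zero
    (f := fun w => (1 - w) ^ α * F w) (a := -s) (b := s)
    (fun x hx => ((hGderiv x (hsub hx)).continuousAt).continuousWithinAt)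
    (fun x hx => ((hGderiv x (hsub (Ico_subset_Icc_self hx))).hasDerivWithinAt))
  have hyIcc : y ∈ Icc (-s) s := by
    constructor
    · exact neg_abs_le y
    · exact le_abs_self y
  have h0Icc : (0:ℝ) ∈ Icc (-s) s := ⟨by linarith, hs0⟩
  have hGy := hconst y hyIcc
  have hG0 := hconst 0 h0Icc
  have hF0 : F 0 = 1 := by
    show (∑' n : ℕ, g n 0) = 1
    rw [tsum_eq_single 0]
    · simp [hgdef, binc_zero α hα]
    · intro n hn
      simp [hgdef, zero_pow hn]
  have hG0v : (1 - (0:ℝ)) ^ α * F 0 = 1 := by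
    rw [hF0]; simp
  have hGyv : (1 - y) ^ α * F y = 1 := by
    have h := hGy.trans hG0.symm
    rw [h]; exact hG0v
  have h1y : (0:ℝ) < 1 - y := by
    have := lt_of_abs_lt hy
    linarith [le_abs_self y, hy]
  have hFy : F y = (1 - y) ^ (-α) := by
    rw [Real.rpow_neg h1y.le]
    have hne : (1 - y) ^ α ≠ 0 := (Real.rpow_pos_of_pos h1y α).ne'
    field_simp at hGyv ⊢
    linarith [hGyv]
  have := (binc_summable α hα hα' hy).hasSum
  rw [show (∑' n, binc α n * y ^ n) = F y from rfl, hFy] at this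
  exact this

/-- Z-transform of the odd-indexed binomial subsequence `n ↦ φ̃_α(2n+1)`:
for `0 < α ≤ 1` and `z > 1`,
`∑ₙ Γ(2n+1+α)/(Γ(α)·Γ(2n+2))·z^(-n) = (z^(1/2)/2)·((1-z^(-1/2))^(-α) - (1+z^(-1/2))^(-α))`. -/
theorem ztransform_phi_odd (α : ℝ) (hα : 0 < α) (hα' : α ≤ 1) (z : ℝ) (hz : 1 < z) :
    ∑' n : ℕ, Real.Gamma (2 * (n : ℝ) + 1 + α) /
        (Real.Gamma α * Real.Gamma (2 * (n : ℝ) + 2)) * z ^ (-(n : ℝ))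
      = z ^ ((1 / 2 : ℝ)) / 2 *
          ((1 - z ^ (-(1 / 2 : ℝ))) ^ (-α) - (1 + z ^ (-(1 / 2 : ℝ))) ^ (-α)) := by
  have hz0 : (0 : ℝ) < z := lt_trans one_pos hz
  set x : ℝ := z ^ (-(1 / 2 : ℝ)) with hxdef
  have hx0 : 0 < x := Real.rpow_pos_of_pos hz0 _
  have hx1 : x < 1 := Real.rpow_lt_one_of_one_lt_of_neg hz (by norm_num)
  have hxabs : |x| < 1 := by rw [abs_of_pos hx0]; exact hx1
  have hnxabs : |(-x)| < 1 := by rw [abs_neg]; exact hxabs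
  have hA := binc_hasSum α hα hα' hxabs
  have hB := binc_hasSum α hα hα' hnxabs
  rw [show (1 : ℝ) - (-x) = 1 + x by ring] at hB
  set A : ℝ := (1 - x) ^ (-α) with hAdef
  set B : ℝ := (1 + x) ^ (-α) with hBdef
  have hD := hA.sub hB
  set f : ℕ → ℝ := fun m => binc α m * x ^ m - binc α m * (-x) ^ m with hfdef
  have hinj : Function.Injective (fun n : ℕ => 2 * n + 1) := by
    intro a b hab
    simpa using hab
  have hsupp : ∀ m : ℕ, m ∉ Set.range (fun n : ℕ => 2 * n + 1) → f m = 0 := by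
    intro m hm
    have hev : Even m := by
      rcases Nat.even_or_odd m with h | h
      · exact h
      · exfalso; apply hm; obtain ⟨k, hk⟩ := h; exact ⟨k, by simp; omega⟩
    simp only [hfdef, hev.neg_pow, sub_self]
  have hOdd : HasSum (fun n : ℕ => f (2 * n + 1)) (A - B) :=
    (Function.Injective.hasSum_iff hinj hsupp).mpr hD
  have hOdd2 : HasSum (fun n : ℕ => binc α (2 * n + 1) * x ^ (2 * n + 1)) ((A - B) / 2) := by
    have h2 := hOdd.div_const 2
    have heq : (fun n : ℕ => f (2 * n + 1) / 2)
        = fun n : ℕ => binc α (2 * n + 1) * x ^ (2 * n + 1) := by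
      funext n
      have hodd : Odd (2 * n + 1) := ⟨n, by ring⟩
      simp only [hfdef, hodd.neg_pow]
      ring
    rwa [heq] at h2
  have hxne : x ≠ 0 := hx0.ne'
  have hT : HasSum (fun n : ℕ => binc α (2 * n + 1) * x ^ (2 * n + 1) / x) ((A - B) / 2 / x) :=
    hOdd2.div_const x
  have hTeq : (fun n : ℕ => binc α (2 * n + 1) * x ^ (2 * n + 1) / x)
      = fun n : ℕ => Real.Gamma (2 * (n : ℝ) + 1 + α) /
          (Real.Gamma α * Real.Gamma (2 * (n : ℝ) + 2)) * z ^ (-(n : ℝ)) := by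
    funext n
    have hpow : x ^ (2 * n + 1) / x = x ^ (2 * n) := by
      rw [pow_succ]
      field_simp
    have hzx : x ^ (2 * n) = z ^ (-(n : ℝ)) := by
      rw [hxdef, ← Real.rpow_natCast (z ^ (-(1 / 2 : ℝ))) (2 * n), ← Real.rpow_mul hz0.le]
      congr 1
      push_cast
      ring
    have hbinc : binc α (2 * n + 1) = Real.Gamma (2 * (n : ℝ) + 1 + α) /
        (Real.Gamma α * Real.Gamma (2 * (n : ℝ) + 2)) := by
      simp only [binc]
      push_cast
      ring_nf
    rw [mul_div_assoc, hpow, hzx, hbinc]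
  rw [← hTeq]
  rw [hT.tsum_eq]
  have hxinv : z ^ ((1 / 2 : ℝ)) = x⁻¹ := by
    rw [hxdef, ← Real.rpow_neg hz0.le]
    norm_num
  rw [hxinv]
  ring
end

section
/- Let 0 < α ≤ 1 and let z be a real number with z > 1. Then ∑_{n=0}^{∞} Γ(2n+2+α)/(Γ(α)·Γ(2n+3))·z^{−n} = −z + (z/2)·((1+z^{−1/2})^{−α} + (1−z^{−1/2})^{−α}), where all powers are real powers. -/
open Real

noncomputable def binCoef (α : ℝ) (n : ℕ) : ℝ :=
  Real.Gamma (n + α) / (Real.Gamma α * Real.Gamma (n + 1))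

lemma binCoef_zero (α : ℝ) (hα : 0 < α) : binCoef α 0 = 1 := by
  have h : Real.Gamma α ≠ 0 := ne_of_gt (Real.Gamma_pos_of_pos hα)
  simp [binCoef, Real.Gamma_one, h]

lemma binCoef_pos (α : ℝ) (hα : 0 < α) (n : ℕ) : 0 < binCoef α n := by
  have h1 : 0 < Real.Gamma (n + α) := Real.Gamma_pos_of_pos (by positivity)
  have h2 : 0 < Real.Gamma α := Real.Gamma_pos_of_pos hα
  have h3 : 0 < Real.Gamma ((n:ℝ) + 1) := Real.Gamma_pos_of_pos (by positivity)
  exact div_pos h1 (mul_pos h2 h3)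

lemma binCoef_rec (α : ℝ) (hα : 0 < α) (n : ℕ) :
    binCoef α (n + 1) * (n + 1) = binCoef α n * (n + α) := by
  have h1 : Real.Gamma ((n:ℝ) + 1 + α) = ((n:ℝ) + α) * Real.Gamma (n + α) := by
    have := Real.Gamma_add_one (s := (n:ℝ) + α) (by positivity)
    rw [show (n:ℝ) + α + 1 = (n:ℝ) + 1 + α by ring] at this
    exact this
  have h2 : Real.Gamma ((n:ℝ) + 1 + 1) = ((n:ℝ) + 1) * Real.Gamma ((n:ℝ) + 1) :=
    Real.Gamma_add_one (s := (n:ℝ) + 1) (by positivity)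
  have h3 : 0 < Real.Gamma ((n:ℝ) + 1) := Real.Gamma_pos_of_pos (by positivity)
  have h4 : 0 < Real.Gamma α := Real.Gamma_pos_of_pos hα
  simp only [binCoef, Nat.cast_add, Nat.cast_one, h1, h2]
  field_simp

lemma binCoef_le_one (α : ℝ) (hα : 0 < α) (hα' : α ≤ 1) (n : ℕ) : binCoef α n ≤ 1 := by
  induction n with
  | zero => rw [binCoef_zero α hα]
  | succ n ih =>
    have hrec := binCoef_rec α hα n
    have hpos : (0:ℝ) < (n:ℝ) + 1 := by positivity
    have heq : binCoef α (n+1) = binCoef α n * (((n:ℝ) + α) / ((n:ℝ) + 1)) := by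
      field_simp
      linarith [hrec]
    rw [heq]
    have h1 : ((n:ℝ) + α) / ((n:ℝ) + 1) ≤ 1 := by
      rw [div_le_one hpos]; linarith
    have h2 : 0 ≤ ((n:ℝ) + α) / ((n:ℝ) + 1) := by positivity
    calc binCoef α n * (((n:ℝ) + α) / ((n:ℝ) + 1)) ≤ 1 * 1 :=
          mul_le_mul ih h1 h2 zero_le_one
      _ = 1 := one_mul 1

section
variable {α : ℝ}

lemma summable_binCoef (hα : 0 < α) (hα' : α ≤ 1) {x : ℝ} (hx : |x| < 1) :
    Summable (fun n : ℕ => binCoef α n * x ^ n) := by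
  apply Summable.of_norm_bounded (summable_geometric_of_lt_one (abs_nonneg x) hx)
  intro n
  rw [Real.norm_eq_abs, abs_mul, abs_pow, abs_of_pos (binCoef_pos α hα n)]
  calc binCoef α n * |x| ^ n ≤ 1 * |x| ^ n :=
        mul_le_mul_of_nonneg_right (binCoef_le_one α hα hα' n) (by positivity)
    _ = |x| ^ n := one_mul _

lemma summable_deriv_aux {r : ℝ} (hr0 : 0 < r) (hr : r < 1) :
    Summable (fun n : ℕ => (n : ℝ) * r ^ (n - 1)) := by
  have h1 : Summable (fun n : ℕ => (1/r) * ((n:ℝ) ^ 1 * r ^ n)) :=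
    (summable_pow_mul_geometric_of_norm_lt_one (R := ℝ) 1
      (by rw [Real.norm_eq_abs, abs_of_pos hr0]; exact hr)).mul_left _
  apply Summable.of_nonneg_of_le (fun n => by positivity) _ h1
  intro n
  match n with
  | 0 => simp
  | (m+1) =>
    have heq : (1/r) * (((m+1:ℕ):ℝ) ^ 1 * r ^ (m+1)) = ((m+1:ℕ):ℝ) * r ^ m := by
      field_simp
      ring
    rw [heq]
    simp

lemma deriv_term_bound (hα : 0 < α) (hα' : α ≤ 1) {y r : ℝ} (hyr : |y| ≤ r) (n : ℕ) :
    ‖binCoef α n * ((n : ℝ) * y ^ (n - 1))‖ ≤ (n : ℝ) * r ^ (n - 1) := by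
  have hr0 : 0 ≤ r := le_trans (abs_nonneg y) hyr
  rw [Real.norm_eq_abs, abs_mul, abs_mul, abs_of_pos (binCoef_pos α hα n),
    Nat.abs_cast, abs_pow]
  have h2 : |y| ^ (n-1) ≤ r ^ (n-1) := pow_le_pow_left₀ (abs_nonneg y) hyr _
  calc binCoef α n * ((n:ℝ) * |y| ^ (n-1)) ≤ 1 * ((n:ℝ) * |y| ^ (n-1)) :=
        mul_le_mul_of_nonneg_right (binCoef_le_one α hα hα' n) (by positivity)
    _ = (n:ℝ) * |y| ^ (n-1) := one_mul _
    _ ≤ (n:ℝ) * r ^ (n-1) := mul_le_mul_of_nonneg_left h2 n.cast_nonneg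

lemma hasDerivAt_binSeries (hα : 0 < α) (hα' : α ≤ 1) {x : ℝ} (hx : |x| < 1) :
    HasDerivAt (fun y => ∑' n : ℕ, binCoef α n * y ^ n)
      (∑' n : ℕ, binCoef α n * ((n : ℝ) * x ^ (n - 1))) x := by
  set r : ℝ := (1 + |x|) / 2 with hr_def
  have hr0 : 0 < r := by positivity
  have hr1 : r < 1 := by rw [hr_def]; linarith
  have hxr : |x| < r := by rw [hr_def]; linarith
  apply hasDerivAt_tsum_of_isPreconnected (summable_deriv_aux hr0 hr1)
    (isOpen_Ioo (a := -r) (b := r)) (convex_Ioo _ _).isPreconnected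
    (fun n y _ => (hasDerivAt_pow n y).const_mul (binCoef α n))
    ?_ (by constructor <;> [linarith; exact hr0] : (0:ℝ) ∈ Set.Ioo (-r) r)
    (by simpa using summable_binCoef hα hα' (x := 0) (by simp))
    (abs_lt.1 hxr)
  intro n y hy
  exact deriv_term_bound hα hα' (le_of_lt (abs_lt.2 ⟨hy.1, hy.2⟩)) n

lemma hasSum_binCoef (hα : 0 < α) (hα' : α ≤ 1) {x : ℝ} (hx : |x| < 1) :
    HasSum (fun n : ℕ => binCoef α n * x ^ n) ((1 - x) ^ (-α)) := by
  set f : ℝ → ℝ := fun y => ∑' n : ℕ, binCoef α n * y ^ n with hf_def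
  have key : ∀ y : ℝ, |y| < 1 → HasDerivAt f (α * f y / (1 - y)) y := by
    intro y hy
    have hy1 : (0:ℝ) < 1 - y := by cases abs_lt.1 hy; linarith
    have hder := hasDerivAt_binSeries hα hα' hy
    set L : ℝ := ∑' n : ℕ, binCoef α n * ((n : ℝ) * y ^ (n - 1)) with hL_def
    have hsumL : Summable (fun n : ℕ => binCoef α n * ((n : ℝ) * y ^ (n - 1))) := by
      set r : ℝ := (1 + |y|) / 2 with hr_def
      have hr0 : 0 < r := by positivity
      have hr1 : r < 1 := by rw [hr_def]; linarith
      have hxr : |y| ≤ r := by rw [hr_def]; linarith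
      exact Summable.of_norm_bounded (summable_deriv_aux hr0 hr1)
        (deriv_term_bound hα hα' hxr)
    have hLsum : HasSum (fun n : ℕ => binCoef α n * ((n : ℝ) * y ^ (n - 1))) L :=
      hsumL.hasSum
    have hfsum : HasSum (fun n : ℕ => binCoef α n * y ^ n) (f y) :=
      (summable_binCoef hα hα' hy).hasSum
    have hshift : HasSum (fun n : ℕ => binCoef α (n+1) * (((n:ℝ)+1) * y ^ n)) L := by
      have h := (hasSum_nat_add_iff'
        (f := fun n : ℕ => binCoef α n * ((n : ℝ) * y ^ (n - 1))) 1).2 hLsum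
      simp only [Finset.range_one, Finset.sum_singleton, Nat.cast_zero, zero_mul, mul_zero,
        sub_zero] at h
      convert h using 2 with n
      · rfl
      push_cast
      ring_nf
    have hcomb : HasSum (fun n : ℕ => binCoef α (n+1) * (((n:ℝ)+1) * y ^ n))
        (α * f y + y * L) := by
      have h := (hfsum.mul_left α).add (hLsum.mul_left y)
      convert h using 2 with n
      · rfl
      cases n with
      | zero =>
        have h0 := binCoef_rec α hα 0
        push_cast at h0
        simp only [Nat.cast_zero, pow_zero, zero_mul, mul_zero, add_zero, mul_one,
          zero_add] at h0 ⊢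
        linear_combination h0
      | succ m =>
        have hrec := binCoef_rec α hα (m+1)
        push_cast at hrec ⊢
        linear_combination (y ^ (m+1)) * hrec
    have hLeq : L = α * f y + y * L := hshift.unique hcomb
    have hode : L = α * f y / (1 - y) := by
      field_simp
      linarith [hLeq]
    rw [← hode]
    exact hder
  -- F y = f y * (1-y)^α is constant near 0
  set F : ℝ → ℝ := fun y => f y * (1 - y) ^ α with hF_def
  have hFder : ∀ y : ℝ, |y| < 1 → HasDerivAt F 0 y := by
    intro y hy
    have hy1 : (0:ℝ) < 1 - y := by cases abs_lt.1 hy; linarith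
    have h1 := key y hy
    have hb : HasDerivAt (fun w : ℝ => 1 - w) (-1) y := (hasDerivAt_id y).const_sub 1
    have h2 : HasDerivAt (fun w : ℝ => (1 - w) ^ α) (-1 * α * (1 - y) ^ (α - 1)) y :=
      hb.rpow_const (Or.inl (ne_of_gt hy1))
    have h3 := h1.mul h2
    convert h3 using 1
    · rfl
    · rfl
    · rfl
    have hpow : (1 - y) ^ α = (1 - y) ^ (α - 1) * (1 - y) := by
      rw [← Real.rpow_add_one (ne_of_gt hy1)]
      ring_nf
    rw [hpow]
    field_simp
    ring
  have hx1 : (0:ℝ) < 1 - x := by cases abs_lt.1 hx; linarith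
  have hFx : F x = F 0 := by
    rcases le_or_gt 0 x with h0 | h0
    · have := constant_of_has_deriv_right_zero (f := F) (a := 0) (b := x)
        (fun y hy => by
          have hy' : |y| < 1 := by
            rw [abs_lt]; exact ⟨by linarith [hy.1], lt_of_le_of_lt hy.2 (abs_lt.1 hx).2⟩
          exact (hFder y hy').continuousAt.continuousWithinAt)
        (fun y hy => by
          have hy' : |y| < 1 := by
            rw [abs_lt]; exact ⟨by linarith [hy.1], lt_trans hy.2 (abs_lt.1 hx).2⟩
          exact ((hFder y hy').hasDerivWithinAt))
      exact this x ⟨h0, le_refl x⟩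
    · have := constant_of_has_deriv_right_zero (f := F) (a := x) (b := 0)
        (fun y hy => by
          have hy' : |y| < 1 := by
            rw [abs_lt]; exact ⟨lt_of_lt_of_le (abs_lt.1 hx).1 hy.1, by linarith [hy.2]⟩
          exact (hFder y hy').continuousAt.continuousWithinAt)
        (fun y hy => by
          have hy' : |y| < 1 := by
            rw [abs_lt]; exact ⟨lt_of_lt_of_le (abs_lt.1 hx).1 hy.1, by linarith [hy.2]⟩
          exact ((hFder y hy').hasDerivWithinAt))
      exact (this 0 ⟨h0.le, le_refl 0⟩).symm
  have hf0 : f 0 = 1 := by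
    show (∑' n : ℕ, binCoef α n * (0:ℝ) ^ n) = 1
    rw [tsum_eq_single 0 (fun n hn => by simp [zero_pow hn])]
    simp [binCoef_zero α hα]
  have hF0 : F 0 = 1 := by
    show f 0 * (1 - (0:ℝ)) ^ α = 1
    simp [hf0, Real.one_rpow]
  have hfx : f x = (1 - x) ^ (-α) := by
    have h1 : f x * (1 - x) ^ α = 1 := by
      rw [show f x * (1 - x) ^ α = F x from rfl, hFx, hF0]
    have h2 : (0:ℝ) < (1 - x) ^ α := Real.rpow_pos_of_pos hx1 α
    rw [Real.rpow_neg hx1.le]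
    field_simp
    linarith [h1]
  rw [← hfx]
  exact (summable_binCoef hα hα' hx).hasSum

end

/-- Z-transform of the shifted even-indexed binomial subsequence `n ↦ φ̃_α(2n+2)`:
for `0 < α ≤ 1` and `z > 1`,
`∑ₙ Γ(2n+2+α)/(Γ(α)·Γ(2n+3))·z^(-n) = -z + (z/2)·((1+z^(-1/2))^(-α) + (1-z^(-1/2))^(-α))`. -/
theorem ztransform_phi_even_shifted (α : ℝ) (hα : 0 < α) (hα' : α ≤ 1) (z : ℝ) (hz : 1 < z) :
    ∑' n : ℕ, Real.Gamma (2 * (n : ℝ) + 2 + α) /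
        (Real.Gamma α * Real.Gamma (2 * (n : ℝ) + 3)) * z ^ (-(n : ℝ))
      = -z + z / 2 *
          ((1 + z ^ (-(1 / 2 : ℝ))) ^ (-α) + (1 - z ^ (-(1 / 2 : ℝ))) ^ (-α)) := by
  have hz0 : (0:ℝ) < z := lt_trans one_pos hz
  set x : ℝ := z ^ (-(1/2 : ℝ)) with hx_def
  have hx0 : 0 < x := Real.rpow_pos_of_pos hz0 _
  have hx1 : x < 1 := Real.rpow_lt_one_of_one_lt_of_neg hz (by norm_num)
  have hxabs : |x| < 1 := by rw [abs_of_pos hx0]; exact hx1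
  have hnxabs : |(-x)| < 1 := by rwa [abs_neg]
  have h1 := hasSum_binCoef hα hα' hxabs
  have h2 := hasSum_binCoef hα hα' hnxabs
  rw [sub_neg_eq_add] at h2
  have hadd := h1.add h2
  set S : ℝ := (1 - x) ^ (-α) + (1 + x) ^ (-α) with hS_def
  -- extract even part
  have hinj : Function.Injective (fun n : ℕ => 2 * n) := fun a b h => by dsimp at h; omega
  have hvanish : ∀ m : ℕ, m ∉ Set.range (fun n : ℕ => 2 * n) →
      binCoef α m * x ^ m + binCoef α m * (-x) ^ m = 0 := by
    intro m hm
    have hodd : Odd m := by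
      rcases Nat.even_or_odd m with he | ho
      · obtain ⟨k, hk⟩ := he
        exact absurd ⟨k, by dsimp; omega⟩ hm
      · exact ho
    rw [hodd.neg_pow]
    ring
  have heven : HasSum (fun n : ℕ =>
      binCoef α (2*n) * x ^ (2*n) + binCoef α (2*n) * (-x) ^ (2*n)) S :=
    (hinj.hasSum_iff hvanish).2 hadd
  have heven' : HasSum (fun n : ℕ => binCoef α (2*n) * x ^ (2*n) * 2) S := by
    convert heven using 2 with n
    rw [show ((-x) ^ (2*n) : ℝ) = x ^ (2*n) by rw [neg_pow, Even.neg_one_pow ⟨n, by ring⟩, one_mul]]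
    ring
  have hshift : HasSum (fun n : ℕ => binCoef α (2*(n+1)) * x ^ (2*(n+1)) * 2) (S - 2) := by
    have h := (hasSum_nat_add_iff' (f := fun n : ℕ => binCoef α (2*n) * x ^ (2*n) * 2) 1).2 heven'
    simp only [Finset.range_one, Finset.sum_singleton, Nat.mul_zero, pow_zero, mul_one,
      binCoef_zero α hα, one_mul] at h
    convert h using 1
  have hfinal := hshift.mul_left (z/2)
  have hterm : ∀ n : ℕ, (z/2) * (binCoef α (2*(n+1)) * x ^ (2*(n+1)) * 2)
      = Real.Gamma (2 * (n : ℝ) + 2 + α) /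
        (Real.Gamma α * Real.Gamma (2 * (n : ℝ) + 3)) * z ^ (-(n : ℝ)) := by
    intro n
    have hxpow : x ^ (2*(n+1)) = z ^ (-(((n:ℝ))+1)) := by
      rw [hx_def, ← Real.rpow_natCast (z ^ (-(1/2 : ℝ))) (2*(n+1)),
        ← Real.rpow_mul hz0.le]
      congr 1
      push_cast
      ring
    have hzmul : z * z ^ (-(((n:ℝ))+1)) = z ^ (-(n:ℝ)) := by
      nth_rewrite 1 [← Real.rpow_one z]
      rw [← Real.rpow_add hz0]
      congr 1
      ring
    have hcoef : binCoef α (2*(n+1)) = Real.Gamma (2 * (n : ℝ) + 2 + α) /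
        (Real.Gamma α * Real.Gamma (2 * (n : ℝ) + 3)) := by
      rw [binCoef]
      norm_num
      push_cast
      ring_nf
    rw [hxpow, hcoef]
    rw [show (z/2) * (Real.Gamma (2 * (n : ℝ) + 2 + α) /
        (Real.Gamma α * Real.Gamma (2 * (n : ℝ) + 3)) * z ^ (-(((n:ℝ))+1)) * 2)
      = Real.Gamma (2 * (n : ℝ) + 2 + α) /
        (Real.Gamma α * Real.Gamma (2 * (n : ℝ) + 3)) * (z * z ^ (-(((n:ℝ))+1))) by ring,
      hzmul]
  have hsum2 : HasSum (fun n : ℕ => Real.Gamma (2 * (n : ℝ) + 2 + α) /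
        (Real.Gamma α * Real.Gamma (2 * (n : ℝ) + 3)) * z ^ (-(n : ℝ))) ((z/2) * (S - 2)) := by
    convert hfinal using 1
    · rfl
    exact funext fun n => (hterm n).symm
  rw [hsum2.tsum_eq, hS_def]
  ring
end

section
/- Let 0 < α ≤ 1, let z be a real number with z > 1, regarded as a complex number, and let ω = exp(2πi/3) ∈ ℂ. Then ∑_{n=0}^{∞} Γ(3n+α)/(Γ(α)·Γ(3n+1))·z^{−n} = (1/3)·((1−z^{−1/3})^{−α} + (1−ω·z^{−1/3})^{−α} + (1−ω²·z^{−1/3})^{−α}), where z^{−1/3} is the real power of z and the complex powers (·)^{−α} are principal-branch complex powers; in particular the right-hand side is real. -/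
open Complex

lemma binom_hasSum {α : ℝ} (hα : 0 < α) (hα' : α ≤ 1) {x : ℂ} (hx : ‖x‖ < 1) :
    HasSum (fun n : ℕ =>
        ((Real.Gamma (n + α) / (Real.Gamma α * Real.Gamma (n + 1)) : ℝ) : ℂ) * x ^ n)
      ((1 - x) ^ ((-α : ℝ) : ℂ)) := by
  set a : ℕ → ℝ := fun n => Real.Gamma (n + α) / (Real.Gamma α * Real.Gamma (n + 1)) with ha_def
  have ha_pos : ∀ n, 0 < a n := fun n =>
    div_pos (Real.Gamma_pos_of_pos (by positivity))
      (mul_pos (Real.Gamma_pos_of_pos hα) (Real.Gamma_pos_of_pos (by positivity)))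
  have ha0 : a 0 = 1 := by
    simp only [ha_def, Nat.cast_zero, zero_add, Real.Gamma_one, mul_one]
    exact div_self (Real.Gamma_pos_of_pos hα).ne'
  have harec : ∀ n : ℕ, ((n : ℝ) + 1) * a (n + 1) = ((n : ℝ) + α) * a n := by
    intro n
    have h1 : Real.Gamma ((n + 1 : ℕ) + α) = ((n : ℝ) + α) * Real.Gamma (n + α) := by
      have := Real.Gamma_add_one (s := (n : ℝ) + α) (by positivity)
      rw [← this]; push_cast; ring_nf
    have h2 : Real.Gamma ((n + 1 : ℕ) + 1) = ((n : ℝ) + 1) * Real.Gamma ((n : ℝ) + 1) := by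
      have := Real.Gamma_add_one (s := (n : ℝ) + 1) (by positivity)
      rw [← this]; push_cast; ring_nf
    have hΓα := (Real.Gamma_pos_of_pos hα).ne'
    have hΓn := (Real.Gamma_pos_of_pos (s := (n : ℝ) + 1) (by positivity)).ne'
    simp only [ha_def]
    rw [h1, h2]
    field_simp
  have habd : ∀ n, a n ≤ 1 := by
    intro n
    induction n with
    | zero => exact le_of_eq ha0
    | succ n ih =>
      have h := harec n
      have h1 : (0:ℝ) < (n : ℝ) + 1 := by positivity
      nlinarith [ha_pos n, ha_pos (n + 1)]
  -- setup of the disk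
  set r : ℝ := (1 + ‖x‖) / 2 with hr_def
  have hr0 : 0 < r := by positivity
  have hr1 : r < 1 := by rw [hr_def]; linarith
  have hxr : ‖x‖ < r := by rw [hr_def]; linarith [norm_nonneg x]
  set t : Set ℂ := Metric.ball (0 : ℂ) r with ht_def
  have h0t : (0 : ℂ) ∈ t := Metric.mem_ball_self hr0
  have hxt : x ∈ t := by simpa [ht_def, Metric.mem_ball, dist_eq_norm] using hxr
  set g : ℕ → ℂ → ℂ := fun n y => ((a n : ℝ) : ℂ) * y ^ n with hg_def
  set g' : ℕ → ℂ → ℂ := fun n y => ((a n : ℝ) : ℂ) * ((n : ℂ) * y ^ (n - 1)) with hg'_def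
  set u : ℕ → ℝ := fun n => (n : ℝ) * r ^ (n - 1) with hu_def
  have hu : Summable u := by
    have h1 : Summable (fun n : ℕ => ((n : ℝ) + 1) * r ^ n) := by
      have hgeo : Summable (fun n : ℕ => r ^ n) :=
        summable_geometric_of_lt_one hr0.le hr1
      have hk : Summable (fun n : ℕ => (n : ℝ) ^ 1 * r ^ n) := by
        apply summable_pow_mul_geometric_of_norm_lt_one
        rwa [Real.norm_eq_abs, abs_of_pos hr0]
      simpa [add_mul, pow_one] using hk.add hgeo
    have h2 : Summable (fun n : ℕ => u (n + 1)) := by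
      simpa [hu_def, add_mul] using h1
    exact (summable_nat_add_iff 1).mp h2
  have hg : ∀ n (y : ℂ), HasDerivAt (g n) (g' n y) y := fun n y =>
    (hasDerivAt_pow n y).const_mul _
  have hg' : ∀ n, ∀ y ∈ t, ‖g' n y‖ ≤ u n := by
    intro n y hy
    have hyr : ‖y‖ < r := by simpa [ht_def, Metric.mem_ball, dist_eq_norm] using hy
    have : ‖g' n y‖ = a n * ((n : ℝ) * ‖y‖ ^ (n - 1)) := by
      simp [hg'_def, norm_mul, norm_pow, Complex.norm_real, Complex.norm_natCast,
        abs_of_pos (ha_pos n)]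
    rw [this, hu_def]
    have h1 : ‖y‖ ^ (n - 1) ≤ r ^ (n - 1) := pow_le_pow_left₀ (norm_nonneg y) hyr.le _
    have h2 : a n * ((n : ℝ) * ‖y‖ ^ (n - 1)) ≤ 1 * ((n : ℝ) * r ^ (n - 1)) := by
      gcongr
      exact habd n
    simpa using h2
  have hg0 : Summable fun n => g n 0 := by
    apply summable_of_ne_finset_zero (s := {0})
    intro n hn
    simp only [Finset.mem_singleton] at hn
    simp [hg_def, zero_pow hn]
  have hsum : ∀ y ∈ t, Summable (fun n => g n y) := by
    intro y hy
    have hyr : ‖y‖ < r := by simpa [ht_def, Metric.mem_ball, dist_eq_norm] using hy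
    apply Summable.of_norm_bounded (g := fun n => r ^ n)
      (summable_geometric_of_lt_one hr0.le hr1)
    intro n
    have : ‖g n y‖ = a n * ‖y‖ ^ n := by
      simp [hg_def, norm_mul, norm_pow, Complex.norm_real, abs_of_pos (ha_pos n)]
    rw [this]
    calc a n * ‖y‖ ^ n ≤ 1 * r ^ n :=
          mul_le_mul (habd n) (pow_le_pow_left₀ (norm_nonneg y) hyr.le n)
            (by positivity) zero_le_one
      _ = r ^ n := one_mul _
  set f : ℂ → ℂ := fun y => ∑' n, g n y with hf_def
  set f' : ℂ → ℂ := fun y => ∑' n, g' n y with hf'_def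
  have hconv : IsPreconnected t := (convex_ball (0:ℂ) r).isPreconnected
  have hf_deriv : ∀ y ∈ t, HasDerivAt f (f' y) y := fun y hy =>
    hasDerivAt_tsum_of_isPreconnected hu Metric.isOpen_ball hconv
      (fun n y _ => hg n y) hg' h0t hg0 hy
  -- the key ODE : (1-y) f' y = α f y
  have key : ∀ y ∈ t, (1 - y) * f' y = (α : ℂ) * f y := by
    intro y hy
    have hS : HasSum (fun n => g' n y) (f' y) :=
      (Summable.of_norm_bounded (g := u) hu (fun n => hg' n y hy)).hasSum
    have h1 : HasSum (fun n => g' (n + 1) y) (f' y) := by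
      have := (hasSum_nat_add_iff' (f := fun n => g' n y) 1).mpr hS
      simpa [hg'_def] using this
    have hA : HasSum (fun n : ℕ => ((n : ℂ) + α) * ((a n : ℝ) : ℂ) * y ^ n) (f' y) := by
      refine h1.congr_fun fun n => ?_
      have h := congrArg (fun s : ℝ => (s : ℂ)) (harec n)
      push_cast at h
      simp only [hg'_def, Nat.add_sub_cancel]
      push_cast
      linear_combination (-(y ^ n)) * h
    have hC : HasSum (fun n : ℕ => (n : ℂ) * ((a n : ℝ) : ℂ) * y ^ n) (y * f' y) := by
      have h2 : HasSum (fun n => y * g' (n + 1) y) (y * f' y) := h1.mul_left y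
      have h3 : HasSum (fun n : ℕ =>
          (((n:ℕ) + 1 : ℂ)) * ((a (n + 1) : ℝ) : ℂ) * y ^ (n + 1)) (y * f' y) := by
        refine h2.congr_fun fun n => ?_
        simp only [hg'_def, Nat.add_sub_cancel]
        push_cast
        ring
      have h3' : HasSum
          (fun n : ℕ => (fun m : ℕ => (m : ℂ) * ((a m : ℝ) : ℂ) * y ^ m) (n + 1))
          (y * f' y) := by
        refine h3.congr_fun fun n => ?_
        push_cast
        ring
      have h4 := (hasSum_nat_add_iff
          (f := fun m : ℕ => (m : ℂ) * ((a m : ℝ) : ℂ) * y ^ m) 1).mp h3'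
      simpa using h4
    have hB : HasSum (fun n => ((a n : ℝ) : ℂ) * y ^ n) (f y) := (hsum y hy).hasSum
    have hsub := hA.sub hC
    have hαB := hB.mul_left (α : ℂ)
    have hsub' : HasSum (fun n => (α : ℂ) * (((a n : ℝ) : ℂ) * y ^ n))
        (f' y - y * f' y) := by
      refine hsub.congr_fun fun n => ?_
      ring
    have := hsub'.unique hαB
    linear_combination this
  -- F = f * (1-·)^α is locally constant
  set c : ℂ := ((α : ℝ) : ℂ) with hc_def
  set F : ℂ → ℂ := fun y => f y * (1 - y) ^ c with hF_def
  have hre : ∀ y ∈ t, 0 < (1 - y).re := by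
    intro y hy
    have hyr : ‖y‖ < r := by simpa [ht_def, Metric.mem_ball, dist_eq_norm] using hy
    have : y.re ≤ ‖y‖ := Complex.re_le_norm y
    simp only [Complex.sub_re, Complex.one_re]
    linarith
  have hne : ∀ y ∈ t, (1 : ℂ) - y ≠ 0 := by
    intro y hy h
    have := hre y hy
    rw [h] at this
    simp at this
  have hF' : ∀ y ∈ t, HasDerivAt F 0 y := by
    intro y hy
    have hcp : HasDerivAt (fun w : ℂ => (1 - w) ^ c) (c * (1 - y) ^ (c - 1) * (-1)) y := by
      have h1 : HasDerivAt (fun w : ℂ => 1 - w) (-1) y := (hasDerivAt_id y).const_sub 1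
      exact h1.cpow_const (Or.inl (hre y hy))
    have hmul := (hf_deriv y hy).mul hcp
    have heq : f' y * (1 - y) ^ c + f y * (c * (1 - y) ^ (c - 1) * (-1)) = 0 := by
      have hsplit : (1 - y) ^ c = (1 - y) ^ (c - 1) * (1 - y) := by
        conv_lhs => rw [show c = (c - 1) + 1 by ring]
        rw [Complex.cpow_add _ _ (hne y hy), Complex.cpow_one]
      rw [hsplit]
      have hk := key y hy
      linear_combination (1 - y) ^ (c - 1) * hk
    rwa [heq] at hmul
  have hFconst : F x = F 0 := by
    apply (convex_ball (0:ℂ) r).is_const_of_fderivWithin_eq_zero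
      (f := F) (fun y hy => ((hF' y hy).differentiableAt).differentiableWithinAt)
      _ hxt h0t
    intro y hy
    have h := (hF' y hy).hasFDerivAt
    have h2 := h.hasFDerivWithinAt.fderivWithin (Metric.isOpen_ball.uniqueDiffWithinAt hy)
    rw [h2]
    ext
    simp
  have hF0 : F 0 = 1 := by
    have hf0 : f 0 = 1 := by
      show (∑' n, g n 0) = 1
      rw [tsum_eq_single 0 (fun n hn => by simp [hg_def, zero_pow hn])]
      simp [hg_def, ha0]
    show f 0 * (1 - 0 : ℂ) ^ c = 1
    simp [hf0, Complex.one_cpow]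
  have hfx : f x = ((1 - x) ^ c)⁻¹ := by
    have h1 : f x * (1 - x) ^ c = 1 := by
      have h2 := hFconst.trans hF0
      simpa [hF_def] using h2
    exact eq_inv_of_mul_eq_one_left (by linear_combination h1)
  have hgoal : ((1 - x) ^ ((-α : ℝ) : ℂ)) = f x := by
    rw [hfx, hc_def]
    rw [show ((-α : ℝ) : ℂ) = -((α : ℝ) : ℂ) by push_cast; ring, Complex.cpow_neg]
  rw [hgoal]
  exact (hsum x hxt).hasSum

/-- Z-transform of the subsequence `n ↦ φ̃_α(3n)` for `0 < α ≤ 1`, `z > 1`,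
with `ω = exp(2πi/3)`:
`∑ₙ Γ(3n+α)/(Γ(α)·Γ(3n+1))·z^(-n)
  = (1/3)·((1-z^(-1/3))^(-α) + (1-ω·z^(-1/3))^(-α) + (1-ω²·z^(-1/3))^(-α))`,
the sum of real terms being taken in `ℂ`, so in particular the RHS is real. -/
theorem ztransform_phi_mod3_0 (α : ℝ) (hα : 0 < α) (hα' : α ≤ 1) (z : ℝ) (hz : 1 < z)
    (ω : ℂ) (hω : ω = Complex.exp (2 * (Real.pi : ℂ) * Complex.I / 3)) :
    HasSum (fun n : ℕ =>
        ((Real.Gamma (3 * (n : ℝ) + α) /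
            (Real.Gamma α * Real.Gamma (3 * (n : ℝ) + 1)) * z ^ (-(n : ℝ)) : ℝ) : ℂ))
      ((1 / 3 : ℂ) *
        ((1 - ((z ^ (-(1 / 3 : ℝ)) : ℝ) : ℂ)) ^ ((-α : ℝ) : ℂ)
          + (1 - ω * ((z ^ (-(1 / 3 : ℝ)) : ℝ) : ℂ)) ^ ((-α : ℝ) : ℂ)
          + (1 - ω ^ 2 * ((z ^ (-(1 / 3 : ℝ)) : ℝ) : ℂ)) ^ ((-α : ℝ) : ℂ))) := by
  have hz0 : (0 : ℝ) < z := lt_trans one_pos hz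
  set q : ℝ := z ^ (-(1 / 3 : ℝ)) with hq_def
  have hq0 : 0 < q := Real.rpow_pos_of_pos hz0 _
  have hq1 : q < 1 := Real.rpow_lt_one_of_one_lt_of_neg hz (by norm_num)
  -- facts about ω
  have hπ : (Real.pi : ℂ) ≠ 0 := Complex.ofReal_ne_zero.mpr Real.pi_ne_zero
  have hω3 : ω ^ 3 = 1 := by
    rw [hω, ← Complex.exp_nat_mul]
    rw [show ((3 : ℕ) : ℂ) * (2 * (Real.pi : ℂ) * Complex.I / 3)
        = 2 * Real.pi * Complex.I by push_cast; ring]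
    exact Complex.exp_two_pi_mul_I
  have hω1 : ω ≠ 1 := by
    rw [hω]
    intro h
    rw [Complex.exp_eq_one_iff] at h
    obtain ⟨k, hk⟩ := h
    have h2πI : (2 : ℂ) * Real.pi * Complex.I ≠ 0 := by
      simp [hπ, Complex.I_ne_zero]
    have h13 : (1 : ℂ) / 3 = (k : ℂ) :=
      mul_left_cancel₀ h2πI (by linear_combination hk)
    have h2 : (1 : ℂ) = 3 * k := by linear_combination 3 * h13
    have h3 : (1 : ℤ) = 3 * k := by exact_mod_cast h2
    omega
  have hord : orderOf ω = 3 := orderOf_eq_prime hω3 hω1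
  have hωn : ∀ n : ℕ, ω ^ n = 1 ↔ 3 ∣ n := by
    intro n
    rw [← hord, orderOf_dvd_iff_pow_eq_one]
  have hnormω : ‖ω‖ = 1 := by
    rw [hω, Complex.norm_exp]
    have : (2 * (Real.pi : ℂ) * Complex.I / 3).re = 0 := by
      simp [Complex.div_re, Complex.mul_re, Complex.mul_im]
    rw [this, Real.exp_zero]
  -- the three binomial series
  have h0 : HasSum (fun n : ℕ =>
      ((Real.Gamma (n + α) / (Real.Gamma α * Real.Gamma (n + 1)) : ℝ) : ℂ) * ((q : ℂ)) ^ n)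
      ((1 - (q : ℂ)) ^ ((-α : ℝ) : ℂ)) := by
    apply binom_hasSum hα hα'
    rw [Complex.norm_real, Real.norm_eq_abs, abs_of_pos hq0]
    exact hq1
  have h1 : HasSum (fun n : ℕ =>
      ((Real.Gamma (n + α) / (Real.Gamma α * Real.Gamma (n + 1)) : ℝ) : ℂ) * (ω * q) ^ n)
      ((1 - ω * q) ^ ((-α : ℝ) : ℂ)) := by
    apply binom_hasSum hα hα'
    rw [norm_mul, hnormω, one_mul, Complex.norm_real, Real.norm_eq_abs, abs_of_pos hq0]
    exact hq1
  have h2 : HasSum (fun n : ℕ =>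
      ((Real.Gamma (n + α) / (Real.Gamma α * Real.Gamma (n + 1)) : ℝ) : ℂ) * (ω ^ 2 * q) ^ n)
      ((1 - ω ^ 2 * q) ^ ((-α : ℝ) : ℂ)) := by
    apply binom_hasSum hα hα'
    rw [norm_mul, norm_pow, hnormω, one_pow, one_mul, Complex.norm_real, Real.norm_eq_abs,
      abs_of_pos hq0]
    exact hq1
  set c : ℕ → ℂ := fun n =>
    ((Real.Gamma (n + α) / (Real.Gamma α * Real.Gamma (n + 1)) : ℝ) : ℂ) with hc_def
  have H := ((h0.add h1).add h2).mul_left (1 / 3 : ℂ)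
  -- identify the terms with the "if 3 ∣ n" function
  have hkey : ∀ n : ℕ,
      (1 / 3 : ℂ) * (c n * (q : ℂ) ^ n + c n * (ω * q) ^ n + c n * (ω ^ 2 * q) ^ n)
        = if 3 ∣ n then c n * (q : ℂ) ^ n else 0 := by
    intro n
    have hexp : c n * (q : ℂ) ^ n + c n * (ω * q) ^ n + c n * (ω ^ 2 * q) ^ n
        = c n * (q : ℂ) ^ n * (1 + ω ^ n + (ω ^ n) ^ 2) := by
      rw [mul_pow, mul_pow, ← pow_mul, ← pow_mul]
      ring
    rw [hexp]
    by_cases hd : 3 ∣ n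
    · rw [if_pos hd, (hωn n).mpr hd]
      ring
    · rw [if_neg hd]
      have hne : ω ^ n ≠ 1 := fun h => hd ((hωn n).mp h)
      have hcube : (ω ^ n) ^ 3 = 1 := by
        rw [← pow_mul, mul_comm, pow_mul, hω3, one_pow]
      have hzero : 1 + ω ^ n + (ω ^ n) ^ 2 = 0 := by
        have hfac : (ω ^ n - 1) * (1 + ω ^ n + (ω ^ n) ^ 2) = 0 := by
          linear_combination hcube
        rcases mul_eq_zero.mp hfac with h | h
        · exact absurd (sub_eq_zero.mp h) hne
        · exact h
      rw [hzero]
      ring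
  have Hif : HasSum (fun n : ℕ => if 3 ∣ n then c n * (q : ℂ) ^ n else 0)
      ((1 / 3 : ℂ) *
        ((1 - (q : ℂ)) ^ ((-α : ℝ) : ℂ) + (1 - ω * q) ^ ((-α : ℝ) : ℂ)
          + (1 - ω ^ 2 * q) ^ ((-α : ℝ) : ℂ))) := by
    refine HasSum.congr_fun ?_ (fun n => (hkey n).symm)
    exact H
  -- reindex along n ↦ 3n
  have hinj : Function.Injective (fun n : ℕ => 3 * n) := fun a b h => by
    simp only at h; omega
  have hvanish : ∀ m : ℕ, m ∉ Set.range (fun n : ℕ => 3 * n) →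
      (if 3 ∣ m then c m * (q : ℂ) ^ m else 0) = 0 := by
    intro m hm
    rw [if_neg]
    intro ⟨k, hk⟩
    exact hm ⟨k, by simp only []; omega⟩
  have Hfinal := (hinj.hasSum_iff hvanish).mpr Hif
  refine Hfinal.congr_fun fun n => ?_
  simp only [Function.comp]
  rw [if_pos ⟨n, rfl⟩]
  -- now the term identification
  have hqpow : (q : ℝ) ^ (3 * n) = z ^ (-(n : ℝ)) := by
    rw [hq_def, ← Real.rpow_natCast (z ^ (-(1 / 3 : ℝ))) (3 * n), ← Real.rpow_mul hz0.le]
    congr 1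
    push_cast
    ring
  have hcast : ((3 * n : ℕ) : ℝ) = 3 * (n : ℝ) := by push_cast; ring
  rw [hc_def]
  push_cast [hcast]
  rw [show ((q : ℂ)) ^ (3 * n) = (((q ^ (3 * n) : ℝ)) : ℂ) by push_cast; ring, hqpow]
end

section
/- Let 0 < α ≤ 1, let z be a real number with z > 1, regarded as a complex number, and let ω = exp(2πi/3) ∈ ℂ. Then ∑_{n=0}^{∞} Γ(3n+2+α)/(Γ(α)·Γ(3n+3))·z^{−n} = (z^{2/3}/3)·((1−z^{−1/3})^{−α} + ω·(1−ω·z^{−1/3})^{−α} + ω²·(1−ω²·z^{−1/3})^{−α}), where z^{2/3} and z^{−1/3} are real powers of z and the complex powers (·)^{−α} are principal-branch complex powers; in particular the right-hand side is real. -/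
open Complex FormalMultilinearSeries

noncomputable def bc (α : ℝ) (n : ℕ) : ℝ := Real.Gamma (n + α) / (Real.Gamma α * n.factorial)

lemma bc_zero (α : ℝ) (hα : 0 < α) : bc α 0 = 1 := by
  simp [bc, div_self (ne_of_gt (Real.Gamma_pos_of_pos hα))]

lemma bc_pos (α : ℝ) (hα : 0 < α) (n : ℕ) : 0 < bc α n := by
  apply div_pos (Real.Gamma_pos_of_pos (by positivity))
  exact mul_pos (Real.Gamma_pos_of_pos hα) (by positivity)

lemma bc_rec (α : ℝ) (hα : 0 < α) (n : ℕ) :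
    ((n : ℝ) + 1) * bc α (n + 1) = ((n : ℝ) + α) * bc α n := by
  have h2 : Real.Gamma (((n + 1 : ℕ) : ℝ) + α) = ((n : ℝ) + α) * Real.Gamma ((n : ℝ) + α) := by
    rw [show (((n + 1 : ℕ) : ℝ) + α) = ((n : ℝ) + α) + 1 by push_cast; ring,
      Real.Gamma_add_one (by positivity)]
  unfold bc
  rw [h2, Nat.factorial_succ]
  have hΓ : Real.Gamma α ≠ 0 := ne_of_gt (Real.Gamma_pos_of_pos hα)
  have hfac : (n.factorial : ℝ) ≠ 0 := by positivity
  push_cast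
  field_simp

lemma bc_le_one (α : ℝ) (hα : 0 < α) (hα' : α ≤ 1) (n : ℕ) : bc α n ≤ 1 := by
  induction n with
  | zero => rw [bc_zero α hα]
  | succ n ih =>
      have hr := bc_rec α hα n
      have hpos : (0:ℝ) < (n : ℝ) + 1 := by positivity
      have hb : bc α (n + 1) = ((n : ℝ) + α) / ((n : ℝ) + 1) * bc α n := by
        field_simp
        linarith [hr]
      rw [hb]
      have h1 : ((n : ℝ) + α) / ((n : ℝ) + 1) ≤ 1 := by
        rw [div_le_one hpos]; linarith
      calc ((n : ℝ) + α) / ((n : ℝ) + 1) * bc α n ≤ 1 * bc α n :=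
            mul_le_mul_of_nonneg_right h1 (bc_pos α hα n).le
        _ ≤ 1 := by rw [one_mul]; exact ih

lemma hasSum_deriv_of_ball (p : FormalMultilinearSeries ℂ ℂ ℂ) (f : ℂ → ℂ)
    (hball : HasFPowerSeriesOnBall f p 0 1) {y : ℂ} (hy : y ∈ Metric.eball (0 : ℂ) 1) :
    HasSum (fun n : ℕ => ((n : ℂ) + 1) * p.coeff (n + 1) * y ^ n) (deriv f y) := by
  rcases eq_or_ne y 0 with rfl | hy0
  · have hd : deriv f 0 = p 1 fun _ => 1 := hball.hasFPowerSeriesAt.deriv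
    have hp1 : (p 1 fun _ => (1:ℂ)) = p.coeff 1 := by
      rw [p.apply_eq_pow_smul_coeff]
      simp
    have h2 : HasSum (fun n : ℕ => ((n : ℂ) + 1) * p.coeff (n + 1) * (0:ℂ) ^ n) (p.coeff 1) := by
      have := hasSum_single (f := fun n : ℕ => ((n : ℂ) + 1) * p.coeff (n + 1) * (0:ℂ) ^ n) 0 (by
        intro b hb
        simp [zero_pow hb])
      simpa using this
    rw [hd, hp1]
    exact h2
  · have hdball := hball.fderiv
    have h1 := hdball.hasSum hy
    rw [zero_add] at h1
    have h2 := (ContinuousLinearMap.apply ℂ ℂ (1 : ℂ)).hasSum h1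
    simp only [ContinuousLinearMap.apply_apply] at h2
    have hterm : ∀ n : ℕ, (p.derivSeries n fun _ => y) 1
        = ((n : ℂ) + 1) * p.coeff (n + 1) * y ^ n := by
      intro n
      have hdiag := p.derivSeries_apply_diag n y
      have hy' : (p.derivSeries n fun _ => y) y = y * (p.derivSeries n fun _ => y) 1 := by
        have h3 : (p.derivSeries n fun _ => y) y = (p.derivSeries n fun _ => y) (y • 1) := by
          norm_num
        rw [h3, map_smul, smul_eq_mul]
      have hval : (p (n+1) fun _ => y) = p.coeff (n + 1) * y ^ (n + 1) := by
        rw [p.apply_eq_pow_smul_coeff, smul_eq_mul]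
        ring
      rw [hy', hval, nsmul_eq_mul] at hdiag
      have h4 : y * (p.derivSeries n fun _ => y) 1
          = y * (((n : ℂ) + 1) * p.coeff (n + 1) * y ^ n) := by
        rw [hdiag]; push_cast; ring
      exact mul_left_cancel₀ hy0 h4
    have hfd : fderiv ℂ f y 1 = deriv f y := fderiv_apply_one_eq_deriv
    rw [hfd] at h2
    exact h2.congr_fun fun n => (hterm n).symm

set_option maxHeartbeats 1000000 in
theorem binomial_hasSum (α : ℝ) (hα : 0 < α) (hα' : α ≤ 1) {x : ℂ} (hx : ‖x‖ < 1) :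
    HasSum (fun n : ℕ => ((bc α n : ℝ) : ℂ) * x ^ n) ((1 - x) ^ (-(α : ℂ))) := by
  set cc : ℕ → ℂ := fun n => ((bc α n : ℝ) : ℂ) with hcc
  set p : FormalMultilinearSeries ℂ ℂ ℂ := ofScalars ℂ cc with hp
  have hccnorm : ∀ n, ‖cc n‖ ≤ 1 := by
    intro n
    simp only [hcc, Complex.norm_real, Real.norm_eq_abs, abs_of_pos (bc_pos α hα n)]
    exact bc_le_one α hα hα' n
  have hrad : (1 : ENNReal) ≤ p.radius := by
    apply p.le_radius_of_bound 1 (r := 1)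
    intro n
    simp only [hp, ofScalars_norm]
    simpa using hccnorm n
  have hball : HasFPowerSeriesOnBall p.sum p 0 1 :=
    (p.hasFPowerSeriesOnBall (lt_of_lt_of_le zero_lt_one hrad)).mono zero_lt_one hrad
  set f : ℂ → ℂ := p.sum with hf
  have hmem : ∀ {y : ℂ}, ‖y‖ < 1 → y ∈ Metric.eball (0 : ℂ) 1 := by
    intro y hy
    simp only [Metric.mem_eball, edist_zero_right, ← ENNReal.coe_one, enorm_eq_nnnorm, ENNReal.coe_lt_coe,
      ← NNReal.coe_lt_coe]
    simpa using hy
  have hS : ∀ {y : ℂ}, ‖y‖ < 1 → HasSum (fun n => cc n * y ^ n) (f y) := by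
    intro y hy
    have := hball.hasSum (hmem hy)
    rw [zero_add] at this
    simpa only [hp, ofScalars_apply_eq, smul_eq_mul] using this
  have hf0 : f 0 = 1 := by
    have h1 := hS (by simp : ‖(0:ℂ)‖ < 1)
    have h2 : HasSum (fun n => cc n * (0:ℂ) ^ n) (cc 0) := by
      have := hasSum_single (f := fun n => cc n * (0:ℂ) ^ n) 0 (by
        intro b hb
        simp [zero_pow hb])
      simpa using this
    rw [h1.unique h2, hcc]
    simp [bc_zero α hα]
  have hcoeff : ∀ k : ℕ, p.coeff k = cc k := by
    intro k
    have h0 : p.coeff k = p k fun _ => 1 := rfl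
    rw [h0, hp, ofScalars_apply_eq]
    simp
  have hderiv : ∀ {y : ℂ}, ‖y‖ < 1 →
      HasSum (fun n : ℕ => ((n : ℂ) + 1) * cc (n + 1) * y ^ n) (deriv f y) := by
    intro y hy
    have := hasSum_deriv_of_ball p f hball (hmem hy)
    simpa only [hcoeff] using this
  have hODE : ∀ {y : ℂ}, ‖y‖ < 1 → (1 - y) * deriv f y = (α : ℂ) * f y := by
    intro y hy
    have S1 := hderiv hy
    set D := deriv f y with hD
    set g : ℕ → ℂ := fun n => (n : ℂ) * cc n * y ^ n with hg
    have T1' : HasSum (fun n => g (n + 1)) (y * D) := by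
      refine (S1.mul_left y).congr_fun fun n => ?_
      simp only [hg]
      push_cast
      ring
    have T2 : HasSum g (y * D) := by
      have := (hasSum_nat_add_iff (f := g) 1).mp T1'
      simpa [hg] using this
    have S4 : HasSum (fun n => (α : ℂ) * (cc n * y ^ n)) (D - y * D) := by
      refine (S1.sub T2).congr_fun fun n => ?_
      have hrecC : ((n : ℂ) + 1) * cc (n + 1) = ((n : ℂ) + (α : ℂ)) * cc n := by
        simp only [hcc]
        exact_mod_cast congrArg (fun t : ℝ => (t : ℂ)) (bc_rec α hα n)
      simp only [hg]
      linear_combination (-(y ^ n)) * hrecC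
    have S5 := (hS hy).mul_left (α : ℂ)
    have h6 := S4.unique S5
    linear_combination h6
  set G : ℂ → ℂ := fun w => (1 - w) ^ (α : ℂ) * f w with hG
  have hgd : ∀ y ∈ Metric.ball (0:ℂ) 1, HasDerivAt G 0 y := by
    intro y hy
    rw [Metric.mem_ball, dist_zero_right] at hy
    have hre : 0 < (1 - y).re := by
      have h1 : |y.re| ≤ ‖y‖ := Complex.abs_re_le_norm y
      have h2 : ‖y‖ = ‖y‖ := rfl
      have h3 : y.re ≤ |y.re| := le_abs_self _
      simp only [Complex.sub_re, Complex.one_re]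
      linarith
    have hne : (1 : ℂ) - y ≠ 0 := by
      intro h
      rw [h] at hre
      simp at hre
    have hu : HasDerivAt (fun w : ℂ => 1 - w) (-1 : ℂ) y := by
      simpa using (hasDerivAt_id y).const_sub 1
    have h1 : HasDerivAt (fun w : ℂ => (1 - w) ^ (α : ℂ))
        ((α : ℂ) * (1 - y) ^ ((α : ℂ) - 1) * (-1)) y := hu.cpow_const (Or.inl hre)
    have h2 : HasDerivAt f (deriv f y) y :=
      ((hball.analyticAt_of_mem (hmem hy)).differentiableAt).hasDerivAt
    have h3 := h1.mul h2
    have hsplit : (1 - y) ^ (α : ℂ) = (1 - y) * (1 - y) ^ ((α : ℂ) - 1) := by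
      nth_rewrite 2 [← Complex.cpow_one (1 - y)]
      rw [← Complex.cpow_add _ _ hne]
      ring_nf
    have hode := hODE hy
    convert h3 using 1
    · rfl
    · rfl
    · rfl
    rw [hsplit]
    linear_combination (-(1 - y) ^ ((α : ℂ) - 1)) * hode
  have hconst : ∀ y ∈ Metric.ball (0:ℂ) 1, G y = G 0 := by
    intro y hy
    refine (convex_ball (0:ℂ) 1).is_const_of_fderivWithin_eq_zero
      (fun w hw => ((hgd w hw).differentiableAt).differentiableWithinAt) ?_ hy
      (by simp [Metric.mem_ball])
    intro w hw
    rw [fderivWithin_of_isOpen Metric.isOpen_ball hw, (hgd w hw).hasFDerivAt.fderiv]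
    ext1
    simp
  have hG0 : G 0 = 1 := by
    simp only [hG, hf0]
    simp
  have hxb : x ∈ Metric.ball (0:ℂ) 1 := by
    rw [Metric.mem_ball, dist_zero_right]; exact hx
  have hGx : (1 - x) ^ (α : ℂ) * f x = 1 := by
    have := hconst x hxb
    rw [hG0] at this
    exact this
  have hre : 0 < (1 - x).re := by
    have h1 : |x.re| ≤ ‖x‖ := Complex.abs_re_le_norm x
    have h3 : x.re ≤ |x.re| := le_abs_self _
    have h2 : ‖x‖ = ‖x‖ := rfl
    simp only [Complex.sub_re, Complex.one_re]
    linarith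
  have hne : (1 : ℂ) - x ≠ 0 := by
    intro h
    rw [h] at hre
    simp at hre
  have hpowne : (1 - x) ^ (α : ℂ) ≠ 0 := by
    rw [Complex.cpow_def_of_ne_zero hne]
    exact Complex.exp_ne_zero _
  have hfx : f x = (1 - x) ^ (-(α : ℂ)) := by
    rw [Complex.cpow_neg]
    field_simp
    linear_combination hGx
  have := hS hx
  rwa [hfx] at this

/-- Z-transform of the subsequence `n ↦ φ̃_α(3n+2)` for `0 < α ≤ 1`, `z > 1`,
with `ω = exp(2πi/3)`:
`∑ₙ Γ(3n+2+α)/(Γ(α)·Γ(3n+3))·z^(-n)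
  = (z^(2/3)/3)·((1-z^(-1/3))^(-α) + ω·(1-ω·z^(-1/3))^(-α) + ω²·(1-ω²·z^(-1/3))^(-α))`,
the sum of real terms being taken in `ℂ`, so in particular the RHS is real. -/
theorem ztransform_phi_mod3_2 (α : ℝ) (hα : 0 < α) (hα' : α ≤ 1) (z : ℝ) (hz : 1 < z)
    (ω : ℂ) (hω : ω = Complex.exp (2 * (Real.pi : ℂ) * Complex.I / 3)) :
    HasSum (fun n : ℕ =>
        ((Real.Gamma (3 * (n : ℝ) + 2 + α) /
            (Real.Gamma α * Real.Gamma (3 * (n : ℝ) + 3)) * z ^ (-(n : ℝ)) : ℝ) : ℂ))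
      ((((z ^ ((2 / 3 : ℝ)) : ℝ) : ℂ) / 3) *
        ((1 - ((z ^ (-(1 / 3 : ℝ)) : ℝ) : ℂ)) ^ ((-α : ℝ) : ℂ)
          + ω * (1 - ω * ((z ^ (-(1 / 3 : ℝ)) : ℝ) : ℂ)) ^ ((-α : ℝ) : ℂ)
          + ω ^ 2 * (1 - ω ^ 2 * ((z ^ (-(1 / 3 : ℝ)) : ℝ) : ℂ)) ^ ((-α : ℝ) : ℂ))) := by
  have hz0 : (0:ℝ) < z := lt_trans zero_lt_one hz
  set t : ℝ := z ^ (-(1 / 3 : ℝ)) with ht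
  have ht0 : 0 < t := Real.rpow_pos_of_pos hz0 _
  have ht1 : t < 1 := Real.rpow_lt_one_of_one_lt_of_neg hz (by norm_num)
  -- ω facts
  have hπ : (Real.pi : ℝ) ≠ 0 := Real.pi_ne_zero
  have hω3 : ω ^ 3 = 1 := by
    rw [hω, ← Complex.exp_nat_mul]
    rw [show ((3:ℕ):ℂ) * (2 * (Real.pi : ℂ) * Complex.I / 3) = 2 * Real.pi * Complex.I by
      push_cast; ring]
    exact Complex.exp_two_pi_mul_I
  have hω1 : ω ≠ 1 := by
    rw [hω]
    intro h
    rw [Complex.exp_eq_one_iff] at h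
    obtain ⟨n, hn⟩ := h
    have hπC : ((Real.pi : ℂ)) ≠ 0 := by exact_mod_cast hπ
    have hne2 : (2 : ℂ) * Real.pi * Complex.I ≠ 0 := by
      simp [hπC, Complex.I_ne_zero]
    have h2 : (2 : ℂ) * Real.pi * Complex.I * 1 = 2 * Real.pi * Complex.I * (3 * n) := by
      field_simp at hn
      linear_combination (2 * (Real.pi : ℂ) * Complex.I) * hn
    have h3 : (1 : ℂ) = 3 * n := mul_left_cancel₀ hne2 h2
    have h4 : ((1 : ℤ) : ℂ) = ((3 * n : ℤ) : ℂ) := by push_cast; linear_combination h3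
    have h5 : (1 : ℤ) = 3 * n := by exact_mod_cast h4
    omega
  have hωsum : 1 + ω + ω ^ 2 = 0 := by
    have h5 : (ω - 1) * (1 + ω + ω ^ 2) = 0 := by
      linear_combination hω3
    rcases mul_eq_zero.mp h5 with h | h
    · exact absurd (by linear_combination h) hω1
    · exact h
  have hωabs : ‖ω‖ = 1 := by
    rw [hω, show 2 * (Real.pi : ℂ) * Complex.I / 3 = ((2 * Real.pi / 3 : ℝ) : ℂ) * Complex.I by
      push_cast; ring]
    exact Complex.norm_exp_ofReal_mul_I _
  -- three sums
  have hnorm : ∀ j : ℕ, ‖ω ^ j * (t : ℂ)‖ < 1 := by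
    intro j
    rw [norm_mul, norm_pow, hωabs, one_pow, one_mul, Complex.norm_real, Real.norm_eq_abs,
      abs_of_pos ht0]
    exact ht1
  have S0 := binomial_hasSum α hα hα' (x := (t : ℂ)) (by
    have := hnorm 0
    simpa using this)
  have S1 := binomial_hasSum α hα hα' (hnorm 1)
  have S2 := binomial_hasSum α hα hα' (hnorm 2)
  set A := ((1 : ℂ) - (t : ℂ)) ^ (-(α : ℂ)) with hA
  set B := ((1 : ℂ) - ω ^ 1 * (t : ℂ)) ^ (-(α : ℂ)) with hB
  set C := ((1 : ℂ) - ω ^ 2 * (t : ℂ)) ^ (-(α : ℂ)) with hC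
  have Stot := (S0.add ((S1.mul_left ω).add (S2.mul_left (ω ^ 2))))
  -- rewrite terms
  set h : ℕ → ℂ := fun n => ((bc α n : ℝ) : ℂ) * (t : ℂ) ^ n * (1 + ω ^ (n + 1) + (ω ^ 2) ^ (n + 1))
    with hh
  have Stot' : HasSum h (A + (ω * B + ω ^ 2 * C)) := by
    refine Stot.congr_fun fun n => ?_
    simp only [hh]
    rw [mul_pow, mul_pow]
    ring
  have hwval : ∀ n : ℕ, (1 + ω ^ (n + 1) + (ω ^ 2) ^ (n + 1))
      = if n % 3 = 2 then 3 else 0 := by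
    intro n
    have hdecomp : n = 3 * (n / 3) + n % 3 := (Nat.div_add_mod n 3).symm ▸ by omega
    set k := n / 3
    set r := n % 3 with hr
    have hωpow : ∀ m : ℕ, ω ^ (3 * m) = 1 := by
      intro m
      rw [pow_mul, hω3, one_pow]
    have hn1 : ω ^ (n + 1) = ω ^ (r + 1) := by
      rw [show n + 1 = 3 * k + (r + 1) by omega, pow_add, hωpow, one_mul]
    have hn2 : (ω ^ 2) ^ (n + 1) = ω ^ (2 * (r + 1) % 3) := by
      rw [← pow_mul, show 2 * (n + 1) = 3 * (2 * (n+1) / 3) + 2 * (n+1) % 3 by omega,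
        pow_add, hωpow, one_mul]
      congr 1
      omega
    rw [hn1, hn2]
    have hrlt : r < 3 := Nat.mod_lt _ (by norm_num)
    interval_cases r
    · norm_num
      linear_combination hωsum
    · norm_num
      linear_combination hωsum
    · norm_num
      linear_combination hω3
  -- extract subsequence 3m+2
  have hinj : Function.Injective (fun m : ℕ => 3 * m + 2) := by
    intro a b hab
    have hab' : 3 * a + 2 = 3 * b + 2 := hab
    omega
  have hvanish : ∀ n ∉ Set.range (fun m : ℕ => 3 * m + 2), h n = 0 := by
    intro n hn
    have hr : n % 3 ≠ 2 := by
      intro hc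
      apply hn
      refine ⟨n / 3, ?_⟩
      show 3 * (n / 3) + 2 = n
      omega
    simp only [hh, hwval n, if_neg hr, mul_zero]
  have Hext : HasSum (fun m : ℕ => h (3 * m + 2)) (A + (ω * B + ω ^ 2 * C)) :=
    (Function.Injective.hasSum_iff hinj hvanish).mpr Stot'
  -- multiply by constant
  set u : ℝ := z ^ ((2 / 3 : ℝ)) with hu
  have Hfin := Hext.mul_left ((u : ℂ) / 3)
  -- final: match terms and value
  have hterm : ∀ m : ℕ,
      ((Real.Gamma (3 * (m : ℝ) + 2 + α) /
          (Real.Gamma α * Real.Gamma (3 * (m : ℝ) + 3)) * z ^ (-(m : ℝ)) : ℝ) : ℂ)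
        = (u : ℂ) / 3 * h (3 * m + 2) := by
    intro m
    have hcoef : Real.Gamma (3 * (m : ℝ) + 2 + α) /
        (Real.Gamma α * Real.Gamma (3 * (m : ℝ) + 3)) = bc α (3 * m + 2) := by
      unfold bc
      rw [show (3 * (m:ℝ) + 3) = ((3*m+2 : ℕ):ℝ) + 1 by push_cast; ring,
        Real.Gamma_nat_eq_factorial,
        show (3 * (m:ℝ) + 2 + α) = ((3*m+2 : ℕ):ℝ) + α by push_cast; ring]
    have hmod : (3 * m + 2) % 3 = 2 := by omega
    have hreal : u / 3 * (bc α (3*m+2) * t ^ (3*m+2) * 3)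
        = bc α (3*m+2) * z ^ (-(m : ℝ)) := by
      have hpow : t ^ (3*m+2) = z ^ ((-(1/3 : ℝ)) * ((3*m+2 : ℕ) : ℝ)) := by
        rw [ht, ← Real.rpow_natCast (z ^ (-(1/3 : ℝ))) (3*m+2), ← Real.rpow_mul hz0.le]
      have hzz : z ^ ((2/3:ℝ)) * z ^ ((-(1/3:ℝ)) * ((3*m+2 : ℕ) : ℝ)) = z ^ (-(m:ℝ)) := by
        rw [← Real.rpow_add hz0]
        congr 1
        push_cast
        ring
      rw [hpow, hu]
      linear_combination (bc α (3 * m + 2)) * hzz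
    rw [hcoef]
    simp only [hh]
    rw [hwval, if_pos hmod, ← hreal]
    push_cast
    ring
  have Hmain := Hfin.congr_fun hterm
  convert Hmain using 1
  · rfl
  rw [hA, hB, hC, pow_one]
  push_cast
  ring
end

section
/- Let 0 < α ≤ 1, let z be a real number with z > 1, regarded as a complex number, and let ω = exp(2πi/3) ∈ ℂ. Then ∑_{n=0}^{∞} Γ(3n+3+α)/(Γ(α)·Γ(3n+4))·z^{−n} = (z/3)·((1−z^{−1/3})^{−α} + (1−ω·z^{−1/3})^{−α} + (1−ω²·z^{−1/3})^{−α}) − z, where z^{−1/3} is the real power of z and the complex powers (·)^{−α} are principal-branch complex powers; in particular the right-hand side is real. -/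
open Complex

namespace ZT3

variable {α : ℝ}


noncomputable def a (α : ℝ) (n : ℕ) : ℝ :=
  Real.Gamma (n + α) / (Real.Gamma α * Real.Gamma (n + 1))

lemma a_zero (hα : 0 < α) : a α 0 = 1 := by
  simp [a, Real.Gamma_one, (Real.Gamma_pos_of_pos hα).ne']

lemma a_pos (hα : 0 < α) (n : ℕ) : 0 < a α n :=
  div_pos (Real.Gamma_pos_of_pos (by positivity))
    (mul_pos (Real.Gamma_pos_of_pos hα) (Real.Gamma_pos_of_pos (by positivity)))

lemma a_rec (hα : 0 < α) (n : ℕ) :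
    ((n : ℝ) + 1) * a α (n + 1) = ((n : ℝ) + α) * a α n := by
  have hΓα : Real.Gamma α ≠ 0 := (Real.Gamma_pos_of_pos hα).ne'
  have hΓ1 : Real.Gamma ((n : ℝ) + 1) ≠ 0 :=
    (Real.Gamma_pos_of_pos (by positivity)).ne'
  have hn1 : ((n : ℝ) + 1) ≠ 0 := by positivity
  unfold a
  push_cast
  have h1 : (n : ℝ) + 1 + α = ((n : ℝ) + α) + 1 := by ring
  rw [h1, Real.Gamma_add_one (by positivity : (n:ℝ) + α ≠ 0), Real.Gamma_add_one hn1]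
  field_simp

lemma a_succ (hα : 0 < α) (n : ℕ) :
    a α (n + 1) = ((n : ℝ) + α) / ((n : ℝ) + 1) * a α n := by
  have hn1 : ((n : ℝ) + 1) ≠ 0 := by positivity
  field_simp
  linarith [a_rec hα n]

lemma a_le_one (hα : 0 < α) (hα' : α ≤ 1) (n : ℕ) : a α n ≤ 1 := by
  induction n with
  | zero => rw [a_zero hα]
  | succ n ih =>
    rw [a_succ hα n]
    have h1 : ((n : ℝ) + α) / ((n : ℝ) + 1) ≤ 1 := by
      rw [div_le_one (by positivity)]; linarith
    calc ((n : ℝ) + α) / ((n : ℝ) + 1) * a α n ≤ 1 * a α n := by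
          exact mul_le_mul_of_nonneg_right h1 (a_pos hα n).le
      _ ≤ 1 := by rw [one_mul]; exact ih


lemma norm_a_le (hα : 0 < α) (hα' : α ≤ 1) (n : ℕ) : ‖((a α n : ℝ) : ℂ)‖ ≤ 1 := by
  rw [Complex.norm_real, Real.norm_eq_abs, abs_of_pos (a_pos hα n)]
  exact a_le_one hα hα' n

lemma summable_base (hα : 0 < α) (hα' : α ≤ 1) {x : ℂ} (hx : ‖x‖ < 1) :
    Summable (fun n : ℕ => ((a α n : ℝ) : ℂ) * x ^ n) := by
  apply Summable.of_norm
  apply Summable.of_nonneg_of_le (fun n => norm_nonneg _)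
    (fun n => ?_) (summable_geometric_of_lt_one (norm_nonneg x) hx)
  rw [norm_mul, norm_pow]
  calc ‖((a α n : ℝ) : ℂ)‖ * ‖x‖ ^ n ≤ 1 * ‖x‖ ^ n := by
        exact mul_le_mul_of_nonneg_right (norm_a_le hα hα' n) (by positivity)
    _ = ‖x‖ ^ n := one_mul _

lemma summable_lin (hα : 0 < α) (hα' : α ≤ 1) {x : ℂ} (hx : ‖x‖ < 1) :
    Summable (fun n : ℕ => (n : ℂ) * ((a α n : ℝ) : ℂ) * x ^ n) := by
  apply Summable.of_norm
  apply Summable.of_nonneg_of_le (fun n => norm_nonneg _) (fun n => ?_)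
    (summable_pow_mul_geometric_of_norm_lt_one 1 (r := ‖x‖) (by rwa [Real.norm_eq_abs, _root_.abs_of_nonneg (norm_nonneg x)]))
  rw [norm_mul, norm_mul, norm_pow]
  have h1 : ‖((n : ℕ) : ℂ)‖ = (n : ℝ) := by
    rw [Complex.norm_natCast]
  rw [h1]
  calc (n : ℝ) * ‖((a α n : ℝ) : ℂ)‖ * ‖x‖ ^ n ≤ (n : ℝ) * 1 * ‖x‖ ^ n := by
        apply mul_le_mul_of_nonneg_right _ (by positivity)
        exact mul_le_mul_of_nonneg_left (norm_a_le hα hα' n) (by positivity)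
    _ = (n : ℝ) ^ 1 * ‖x‖ ^ n := by ring





lemma hasDerivAt_F (hα : 0 < α) (hα' : α ≤ 1) {y : ℂ} (hy : ‖y‖ < 1) :
    HasDerivAt (fun w : ℂ => ∑' n : ℕ, ((a α n : ℝ) : ℂ) * w ^ n)
      (∑' n : ℕ, ((a α n : ℝ) : ℂ) * ((n : ℂ) * y ^ (n - 1))) y := by
  set r : ℝ := (‖y‖ + 1) / 2 with hr
  have hr0 : 0 < r := by positivity
  have hr1 : r < 1 := by rw [hr]; linarith
  have hyr : ‖y‖ < r := by rw [hr]; linarith [norm_nonneg y]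
  set u : ℕ → ℝ := fun n => (n : ℝ) * r ^ (n - 1) with hu
  have hus : Summable u := by
    apply (summable_nat_add_iff 1).mp
    have h2 : Summable (fun n : ℕ => (n : ℝ) ^ 1 * r ^ n + r ^ n) :=
      (summable_pow_mul_geometric_of_norm_lt_one 1
        (r := r) (by rwa [Real.norm_eq_abs, _root_.abs_of_nonneg hr0.le])).add
        (summable_geometric_of_lt_one hr0.le hr1)
    apply h2.congr
    intro n
    simp only [hu, Nat.add_sub_cancel]
    push_cast
    ring
  apply hasDerivAt_tsum_of_isPreconnected hus (Metric.isOpen_ball (x := (0:ℂ)) (ε := r))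
      (convex_ball (0:ℂ) r).isPreconnected
      (fun n w _ => (hasDerivAt_pow n w).const_mul ((a α n : ℝ) : ℂ))
      (fun n w hw => ?_) (Metric.mem_ball_self hr0)
      (summable_base hα hα' (by simp : ‖(0:ℂ)‖ < 1))
      (by rwa [Metric.mem_ball, dist_zero_right])
  rw [Metric.mem_ball, dist_zero_right] at hw
  rw [norm_mul, norm_mul, norm_pow, Complex.norm_natCast]
  calc ‖((a α n : ℝ) : ℂ)‖ * ((n : ℝ) * ‖w‖ ^ (n - 1))
      ≤ 1 * ((n : ℝ) * r ^ (n - 1)) := by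
        apply mul_le_mul (norm_a_le hα hα' n) _ (by positivity) zero_le_one
        exact mul_le_mul_of_nonneg_left
          (pow_le_pow_left₀ (norm_nonneg w) hw.le _) (Nat.cast_nonneg n)
    _ = u n := one_mul _





lemma summable_nr {r : ℝ} (hr0 : 0 ≤ r) (hr1 : r < 1) :
    Summable (fun n : ℕ => (n : ℝ) * r ^ (n - 1)) := by
  apply (summable_nat_add_iff 1).mp
  have h2 : Summable (fun n : ℕ => (n : ℝ) ^ 1 * r ^ n + r ^ n) :=
    (summable_pow_mul_geometric_of_norm_lt_one 1
      (r := r) (by rwa [Real.norm_eq_abs, _root_.abs_of_nonneg hr0])).add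
      (summable_geometric_of_lt_one hr0 hr1)
  apply h2.congr
  intro n
  simp only [Nat.add_sub_cancel]
  push_cast
  ring

lemma summable_deriv (hα : 0 < α) (hα' : α ≤ 1) {y : ℂ} (hy : ‖y‖ < 1) :
    Summable (fun n : ℕ => ((a α n : ℝ) : ℂ) * ((n : ℂ) * y ^ (n - 1))) := by
  apply Summable.of_norm
  apply Summable.of_nonneg_of_le (fun n => norm_nonneg _) (fun n => ?_)
    (summable_nr (norm_nonneg y) hy)
  rw [norm_mul, norm_mul, norm_pow, Complex.norm_natCast]
  calc ‖((a α n : ℝ) : ℂ)‖ * ((n : ℝ) * ‖y‖ ^ (n - 1))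
      ≤ 1 * ((n : ℝ) * ‖y‖ ^ (n - 1)) :=
        mul_le_mul_of_nonneg_right (norm_a_le hα hα' n) (by positivity)
    _ = (n : ℝ) * ‖y‖ ^ (n - 1) := one_mul _

lemma a_rec_c (hα : 0 < α) (n : ℕ) :
    ((n : ℂ) + 1) * ((a α (n + 1) : ℝ) : ℂ) = ((n : ℂ) + (α : ℂ)) * ((a α n : ℝ) : ℂ) := by
  exact_mod_cast congrArg (fun t : ℝ => (t : ℂ)) (a_rec hα n)

lemma ode_key (hα : 0 < α) (hα' : α ≤ 1) {y : ℂ} (hy : ‖y‖ < 1) :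
    (1 - y) * ∑' n : ℕ, ((a α n : ℝ) : ℂ) * ((n : ℂ) * y ^ (n - 1))
      = (α : ℂ) * ∑' n : ℕ, ((a α n : ℝ) : ℂ) * y ^ n := by
  set c : ℕ → ℂ := fun n => ((a α n : ℝ) : ℂ) with hc
  set T := ∑' n : ℕ, c n * ((n : ℂ) * y ^ (n - 1)) with hT
  set S1 := ∑' n : ℕ, (n : ℂ) * c n * y ^ n with hS1
  set F := ∑' n : ℕ, c n * y ^ n with hF
  have hTsum := summable_deriv hα hα' hy
  have hS1sum := summable_lin hα hα' hy
  have hFsum := summable_base hα hα' hy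
  have hstep : T = S1 + (α : ℂ) * F := by
    rw [hT, Summable.tsum_eq_zero_add hTsum]
    simp only [Nat.cast_zero, zero_mul, mul_zero, zero_add, Nat.add_sub_cancel]
    have h1 : ∀ n : ℕ, ((a α (n + 1) : ℝ) : ℂ) * (((n + 1 : ℕ) : ℂ) * y ^ n)
        = (n : ℂ) * ((a α n : ℝ) : ℂ) * y ^ n + (α : ℂ) * (((a α n : ℝ) : ℂ) * y ^ n) := by
      intro n
      have h := a_rec_c hα n
      push_cast
      push_cast at h
      calc ((a α (n+1) : ℝ) : ℂ) * (((n : ℂ) + 1) * y ^ n)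
          = (((n : ℂ) + 1) * ((a α (n+1) : ℝ) : ℂ)) * y ^ n := by ring
        _ = (((n : ℂ) + (α : ℂ)) * ((a α n : ℝ) : ℂ)) * y ^ n := by rw [h]
        _ = (n : ℂ) * ((a α n : ℝ) : ℂ) * y ^ n + (α : ℂ) * (((a α n : ℝ) : ℂ) * y ^ n) := by ring
    refine Eq.trans (tsum_congr h1) ?_
    rw [Summable.tsum_add hS1sum (hFsum.mul_left _), hS1, hF, tsum_mul_left]
  have hstep2 : y * T = S1 := by
    rw [hT, ← tsum_mul_left, hS1]
    apply tsum_congr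
    intro n
    cases n with
    | zero => simp
    | succ m =>
      simp only [Nat.add_sub_cancel]
      push_cast
      rw [pow_succ]
      ring
  calc (1 - y) * T = T - y * T := by ring
    _ = (S1 + (α : ℂ) * F) - S1 := by rw [hstep2, hstep]
    _ = (α : ℂ) * F := by ring

theorem hasSum_binom (hα : 0 < α) (hα' : α ≤ 1) {x : ℂ} (hx : ‖x‖ < 1) :
    HasSum (fun n : ℕ => ((a α n : ℝ) : ℂ) * x ^ n) ((1 - x) ^ (-(α : ℂ))) := by
  set F : ℂ → ℂ := fun w => ∑' n : ℕ, ((a α n : ℝ) : ℂ) * w ^ n with hFdef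
  have hFx : HasSum (fun n : ℕ => ((a α n : ℝ) : ℂ) * x ^ n) (F x) :=
    (summable_base hα hα' hx).hasSum
  suffices hkey : F x = (1 - x) ^ (-(α : ℂ)) by rwa [hkey] at hFx
  set g : ℂ → ℂ := fun w => Complex.exp ((α : ℂ) * Complex.log (1 - w)) * F w with hgdef
  have hslit : ∀ w : ℂ, ‖w‖ < 1 → (1 - w) ∈ Complex.slitPlane := by
    intro w hw
    have := Complex.mem_slitPlane_of_norm_lt_one (z := -w) (by simpa using hw)
    simpa [sub_eq_add_neg] using this
  have hg : ∀ w : ℂ, ‖w‖ < 1 → HasDerivAt g 0 w := by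
    intro w hw
    have h1w0 : (1 : ℂ) - w ≠ 0 := Complex.slitPlane_ne_zero (hslit w hw)
    have hinner : HasDerivAt (fun v : ℂ => 1 - v) (-1) w := (hasDerivAt_id w).const_sub 1
    have hlog : HasDerivAt (fun v : ℂ => Complex.log (1 - v)) ((1 - w)⁻¹ * -1) w :=
      (Complex.hasDerivAt_log (hslit w hw)).comp w hinner
    have hexp : HasDerivAt (fun v : ℂ => Complex.exp ((α : ℂ) * Complex.log (1 - v)))
        (Complex.exp ((α : ℂ) * Complex.log (1 - w)) * ((α : ℂ) * ((1 - w)⁻¹ * -1))) w :=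
      (hlog.const_mul (α : ℂ)).cexp
    have hFd := hasDerivAt_F hα hα' hw
    have hprod := hexp.mul hFd
    have hTval : ∑' n : ℕ, ((a α n : ℝ) : ℂ) * ((n : ℂ) * w ^ (n - 1))
        = (α : ℂ) * F w * (1 - w)⁻¹ := by
      rw [eq_comm, mul_inv_eq_iff_eq_mul₀ h1w0, mul_comm _ (1 - w), ode_key hα hα' hw]
    rw [hTval] at hprod
    exact hprod.congr_deriv (by simp only [hFdef]; ring)
  have hx0 : (0 : ℂ) ∈ Metric.ball (0 : ℂ) 1 := by simp
  have hxx : x ∈ Metric.ball (0 : ℂ) 1 := by simpa [Metric.mem_ball, dist_zero_right] using hx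
  have hconst : g x = g 0 := by
    apply (convex_ball (0 : ℂ) 1).is_const_of_fderivWithin_eq_zero (𝕜 := ℂ)
      (fun w hw => ((hg w (by simpa [Metric.mem_ball, dist_zero_right] using hw)).differentiableAt).differentiableWithinAt)
      (fun w hw => ?_) hxx hx0
    have hw' : ‖w‖ < 1 := by simpa [Metric.mem_ball, dist_zero_right] using hw
    rw [fderivWithin_of_isOpen Metric.isOpen_ball hw, (hg w hw').hasFDerivAt.fderiv]
    ext v
    simp
  have hF0 : F 0 = 1 := by
    have hrfl : F 0 = ∑' n : ℕ, ((a α n : ℝ) : ℂ) * (0 : ℂ) ^ n := rfl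
    rw [hrfl, tsum_eq_single 0 (fun n hn => by simp [zero_pow hn])]
    simp [a_zero hα]
  have hg0 : g 0 = 1 := by
    simp [hgdef, hF0, Complex.log_one]
  rw [hg0] at hconst
  have hE : Complex.exp ((α : ℂ) * Complex.log (1 - x)) ≠ 0 := Complex.exp_ne_zero _
  have hFx' : F x = Complex.exp (-((α : ℂ) * Complex.log (1 - x))) := by
    rw [Complex.exp_neg]
    field_simp [hgdef] at hconst ⊢
    linear_combination hconst
  rw [hFx', Complex.cpow_def_of_ne_zero (Complex.slitPlane_ne_zero (hslit x hx))]
  ring_nf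



lemma omega_pow_three {ω : ℂ} (hω : ω = Complex.exp (2 * (Real.pi : ℂ) * Complex.I / 3)) :
    ω ^ 3 = 1 := by
  rw [hω, ← Complex.exp_nat_mul,
    show ((3 : ℕ) : ℂ) * (2 * (Real.pi : ℂ) * Complex.I / 3) = 2 * (Real.pi : ℂ) * Complex.I by
      push_cast; ring]
  exact Complex.exp_two_pi_mul_I

lemma omega_ne_one {ω : ℂ} (hω : ω = Complex.exp (2 * (Real.pi : ℂ) * Complex.I / 3)) :
    ω ≠ 1 := by
  intro h
  have him : ω.im = Real.sin (2 * Real.pi / 3) := by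
    rw [hω, show 2 * (Real.pi : ℂ) * Complex.I / 3
        = ((2 * Real.pi / 3 : ℝ) : ℂ) * Complex.I by push_cast; ring]
    exact Complex.exp_ofReal_mul_I_im _
  have hpos : 0 < Real.sin (2 * Real.pi / 3) :=
    Real.sin_pos_of_pos_of_lt_pi (by positivity) (by linarith [Real.pi_pos])
  rw [h] at him
  simp only [Complex.one_im] at him
  linarith

lemma norm_omega {ω : ℂ} (hω : ω = Complex.exp (2 * (Real.pi : ℂ) * Complex.I / 3)) :
    ‖ω‖ = 1 := by
  rw [hω, show 2 * (Real.pi : ℂ) * Complex.I / 3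
      = ((2 * Real.pi / 3 : ℝ) : ℂ) * Complex.I by push_cast; ring,
    Complex.norm_exp_ofReal_mul_I]

lemma omega_filter {ω : ℂ} (hω : ω = Complex.exp (2 * (Real.pi : ℂ) * Complex.I / 3)) (m : ℕ) :
    (1 : ℂ) + ω ^ m + (ω ^ 2) ^ m = if 3 ∣ m then 3 else 0 := by
  have h3 := omega_pow_three hω
  have hne := omega_ne_one hω
  have hsum : 1 + ω + ω ^ 2 = 0 := by
    have hfac : (ω - 1) * (1 + ω + ω ^ 2) = ω ^ 3 - 1 := by ring
    rw [h3, sub_self] at hfac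
    rcases mul_eq_zero.mp hfac with h | h
    · exact absurd (sub_eq_zero.mp h) hne
    · exact h
  have hmod : ω ^ m = ω ^ (m % 3) := by
    conv_lhs => rw [← Nat.div_add_mod m 3]
    rw [pow_add, pow_mul, h3, one_pow, one_mul]
  have h2 : (ω ^ 2) ^ m = (ω ^ (m % 3)) ^ 2 := by
    rw [← pow_mul, mul_comm, pow_mul, hmod]
  rw [hmod, h2]
  simp only [Nat.dvd_iff_mod_eq_zero]
  have hlt : m % 3 < 3 := Nat.mod_lt _ (by norm_num)
  set t := m % 3 with ht
  interval_cases t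
  · norm_num
  · rw [if_neg (by norm_num)]
    linear_combination hsum
  · rw [if_neg (by norm_num)]
    linear_combination hsum + ω * h3



end ZT3



/-- Z-transform of the subsequence `n ↦ φ̃_α(3n+3)` for `0 < α ≤ 1`, `z > 1`,
with `ω = exp(2πi/3)`:
`∑ₙ Γ(3n+3+α)/(Γ(α)·Γ(3n+4))·z^(-n)
  = (z/3)·((1-z^(-1/3))^(-α) + (1-ω·z^(-1/3))^(-α) + (1-ω²·z^(-1/3))^(-α)) - z`,
the sum of real terms being taken in `ℂ`, so in particular the RHS is real. -/
theorem ztransform_phi_mod3_3 (α : ℝ) (hα : 0 < α) (hα' : α ≤ 1) (z : ℝ) (hz : 1 < z)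
    (ω : ℂ) (hω : ω = Complex.exp (2 * (Real.pi : ℂ) * Complex.I / 3)) :
    HasSum (fun n : ℕ =>
        ((Real.Gamma (3 * (n : ℝ) + 3 + α) /
            (Real.Gamma α * Real.Gamma (3 * (n : ℝ) + 4)) * z ^ (-(n : ℝ)) : ℝ) : ℂ))
      (((z : ℂ) / 3) *
        ((1 - ((z ^ (-(1 / 3 : ℝ)) : ℝ) : ℂ)) ^ ((-α : ℝ) : ℂ)
          + (1 - ω * ((z ^ (-(1 / 3 : ℝ)) : ℝ) : ℂ)) ^ ((-α : ℝ) : ℂ)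
          + (1 - ω ^ 2 * ((z ^ (-(1 / 3 : ℝ)) : ℝ) : ℂ)) ^ ((-α : ℝ) : ℂ)) - (z : ℂ)) := by
  have hz0 : (0 : ℝ) < z := lt_trans one_pos hz
  set wr : ℝ := z ^ (-(1 / 3 : ℝ)) with hwr
  have hwr_pos : 0 < wr := Real.rpow_pos_of_pos hz0 _
  have hwr_lt : wr < 1 := Real.rpow_lt_one_of_one_lt_of_neg hz (by norm_num)
  set w : ℂ := ((wr : ℝ) : ℂ) with hw
  have hnw : ‖w‖ = wr := by
    rw [hw, Complex.norm_real, Real.norm_eq_abs, abs_of_pos hwr_pos]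
  have hnw1 : ‖w‖ < 1 := by rw [hnw]; exact hwr_lt
  have hnw2 : ‖ω * w‖ < 1 := by
    rw [norm_mul, ZT3.norm_omega hω, one_mul]; exact hnw1
  have hnw3 : ‖ω ^ 2 * w‖ < 1 := by
    rw [norm_mul, norm_pow, ZT3.norm_omega hω, one_pow, one_mul]; exact hnw1
  have S0 := ZT3.hasSum_binom hα hα' hnw1
  have S1 := ZT3.hasSum_binom hα hα' hnw2
  have S2 := ZT3.hasSum_binom hα hα' hnw3
  set T : ℂ := (1 - w) ^ (-(α : ℂ)) + (1 - ω * w) ^ (-(α : ℂ)) + (1 - ω ^ 2 * w) ^ (-(α : ℂ))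
    with hT
  have hadd := (S0.add S1).add S2
  set h : ℕ → ℂ := fun m => if 3 ∣ m then 3 * ((ZT3.a α m : ℝ) : ℂ) * w ^ m else 0 with hh
  have hfun : (fun m : ℕ => (((ZT3.a α m : ℝ) : ℂ) * w ^ m + ((ZT3.a α m : ℝ) : ℂ) * (ω * w) ^ m)
      + ((ZT3.a α m : ℝ) : ℂ) * (ω ^ 2 * w) ^ m) = h := by
    funext m
    have hfil := ZT3.omega_filter hω m
    rw [hh, mul_pow, mul_pow,
      show ((ZT3.a α m : ℝ) : ℂ) * w ^ m + ((ZT3.a α m : ℝ) : ℂ) * (ω ^ m * w ^ m)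
          + ((ZT3.a α m : ℝ) : ℂ) * ((ω ^ 2) ^ m * w ^ m)
        = ((ZT3.a α m : ℝ) : ℂ) * w ^ m * (1 + ω ^ m + (ω ^ 2) ^ m) from by ring, hfil]
    by_cases hd : 3 ∣ m <;> simp only [hd, if_true, if_false, ite_true, ite_false] <;> ring
  rw [hfun] at hadd
  -- extract multiples of 3
  have hinj : Function.Injective (fun n : ℕ => 3 * n) := fun p q hpq => by dsimp at hpq; omega
  have hzero : ∀ m : ℕ, m ∉ Set.range (fun n : ℕ => 3 * n) → h m = 0 := by
    intro m hm
    simp only [hh]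
    rw [if_neg]
    intro hd
    obtain ⟨k, hk⟩ := hd
    exact hm ⟨k, hk.symm⟩
  have hsub : HasSum (fun n : ℕ => h (3 * n)) T :=
    (Function.Injective.hasSum_iff hinj hzero).mpr hadd
  set f : ℕ → ℂ := fun n => 3 * ((ZT3.a α (3 * n) : ℝ) : ℂ) * w ^ (3 * n) with hf
  have hfe : (fun n : ℕ => h (3 * n)) = f := by
    funext n
    simp only [hh, hf]
    rw [if_pos ⟨n, rfl⟩]
  rw [hfe] at hsub
  -- drop the n = 0 term
  have hf0 : ∑ i ∈ Finset.range 1, f i = 3 := by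
    simp [hf, ZT3.a_zero hα]
  have hdrop : HasSum (fun n : ℕ => f (n + 1)) (T - 3) := by
    apply (hasSum_nat_add_iff (f := f) 1).mpr
    rw [hf0, sub_add_cancel]
    exact hsub
  have hfinal := hdrop.mul_left ((z : ℂ) / 3)
  -- identify term and value
  have hwpow : ∀ n : ℕ, wr ^ (3 * (n + 1)) = z ^ (-(n : ℝ) - 1) := by
    intro n
    rw [hwr, ← Real.rpow_natCast (z ^ (-(1 / 3 : ℝ))) (3 * (n + 1)), ← Real.rpow_mul hz0.le]
    congr 1
    push_cast
    ring_nf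
  have hterm : (fun n : ℕ =>
      ((Real.Gamma (3 * (n : ℝ) + 3 + α) /
        (Real.Gamma α * Real.Gamma (3 * (n : ℝ) + 4)) * z ^ (-(n : ℝ)) : ℝ) : ℂ))
      = fun n : ℕ => (z : ℂ) / 3 * f (n + 1) := by
    funext n
    simp only [hf]
    have h1 : (z : ℂ) / 3 * (3 * ((ZT3.a α (3 * (n + 1)) : ℝ) : ℂ) * w ^ (3 * (n + 1)))
        = ((z * (ZT3.a α (3 * (n + 1)) * wr ^ (3 * (n + 1))) : ℝ) : ℂ) := by
      rw [hw]
      push_cast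
      ring
    rw [h1]
    norm_cast
    rw [hwpow n]
    have h2 : z * (ZT3.a α (3 * (n + 1)) * z ^ (-(n : ℝ) - 1))
        = ZT3.a α (3 * (n + 1)) * z ^ (-(n : ℝ)) := by
      rw [show z ^ (-(n : ℝ)) = z ^ (1 + (-(n : ℝ) - 1)) by norm_num,
        Real.rpow_add hz0, Real.rpow_one]
      ring
    rw [h2]
    unfold ZT3.a
    push_cast
    ring_nf
    norm_cast
  have hval : ((z : ℂ) / 3) *
      ((1 - w) ^ ((-α : ℝ) : ℂ) + (1 - ω * w) ^ ((-α : ℝ) : ℂ)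
        + (1 - ω ^ 2 * w) ^ ((-α : ℝ) : ℂ)) - (z : ℂ)
      = (z : ℂ) / 3 * (T - 3) := by
    rw [hT, Complex.ofReal_neg]
    ring
  rw [hterm, hval]
  exact hfinal
end

section
/- Let 0 < α ≤ 1, let z be a real number with z > 1, regarded as a complex number, and let ω = exp(2πi/3) ∈ ℂ. Then ∑_{n=0}^{∞} Γ(3n+4+α)/(Γ(α)·Γ(3n+5))·z^{−n} = (z^{4/3}/3)·((1−z^{−1/3})^{−α} + ω²·(1−ω·z^{−1/3})^{−α} + ω·(1−ω²·z^{−1/3})^{−α}) − z·α, where z^{4/3} and z^{−1/3} are real powers of z and the complex powers (·)^{−α} are principal-branch complex powers; in particular the right-hand side is real. -/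
open Complex Finset

noncomputable def gfun (α : ℝ) (n : ℕ) (w : ℂ) : ℂ :=
  (∏ k ∈ Finset.range n, ((α : ℂ) + k)) * (1 - w) ^ (-(α : ℂ) - n)

lemma gfun_hasDerivAt (α : ℝ) (n : ℕ) {w : ℂ} (hw : w.re < 1) :
    HasDerivAt (gfun α n) (gfun α (n + 1) w) w := by
  have h1 : (1 - w) ∈ Complex.slitPlane := by
    left; simp [Complex.sub_re]; linarith
  have hd : HasDerivAt (fun w : ℂ => 1 - w) (-1) w := by
    simpa using (hasDerivAt_id w).const_sub 1
  have := (hd.cpow_const (c := -(α : ℂ) - n) h1).const_mul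
      (∏ k ∈ Finset.range n, ((α : ℂ) + k))
  convert this using 1
  · rfl
  · rfl
  · rfl
  rw [gfun, Finset.prod_range_succ,
    show -(α:ℂ) - (n + 1 : ℕ) = (-(α:ℂ) - n) - 1 by push_cast; ring]
  ring

lemma iteratedDeriv_gfun (α : ℝ) (n : ℕ) {w : ℂ} (hw : w.re < 1) :
    iteratedDeriv n (fun w : ℂ => (1 - w) ^ (-(α : ℂ))) w = gfun α n w := by
  induction n generalizing w with
  | zero => simp [gfun]
  | succ n ih =>
    rw [iteratedDeriv_succ]
    have hopen : IsOpen {w : ℂ | w.re < 1} := by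
      have : Continuous fun w : ℂ => w.re := Complex.continuous_re
      exact isOpen_lt this continuous_const
    have hev : (iteratedDeriv n (fun w : ℂ => (1 - w) ^ (-(α : ℂ)))) =ᶠ[nhds w] gfun α n := by
      filter_upwards [hopen.mem_nhds hw] with u hu using ih hu
    rw [hev.deriv_eq, (gfun_hasDerivAt α n hw).deriv]

lemma binom_hasSum_s14 (α : ℝ) {y : ℂ} (hy : ‖y‖ < 1) :
    HasSum (fun n : ℕ => (((∏ k ∈ Finset.range n, (α + k)) / n.factorial : ℝ) : ℂ) * y ^ n)
      ((1 - y) ^ (-(α : ℂ))) := by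
  set f : ℂ → ℂ := fun w => (1 - w) ^ (-(α : ℂ)) with hf
  obtain ⟨r, hyr, hr1⟩ : ∃ r : NNReal, ‖y‖ < r ∧ (r : ℝ) < 1 := by
    refine ⟨⟨(1 + ‖y‖) / 2, by positivity⟩, ?_, ?_⟩ <;>
      simp only [NNReal.toReal] <;> linarith
  have hdiff : DifferentiableOn ℂ f (Metric.closedBall 0 r) := by
    intro w hw
    have hw1 : w.re < 1 := by
      have := Complex.re_le_norm w
      have : w.re ≤ ‖w‖ := by simpa using this
      have hwn : ‖w‖ ≤ r := by simpa using Metric.mem_closedBall.mp hw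
      linarith
    have hfg : f = gfun α 0 := by
      funext u; simp [hf, gfun]
    rw [hfg]
    exact (gfun_hasDerivAt α 0 hw1).differentiableAt.differentiableWithinAt
  have hr0 : 0 < r := by
    have : (0:ℝ) ≤ ‖y‖ := norm_nonneg y
    exact_mod_cast lt_of_le_of_lt this hyr
  have hp := hdiff.hasFPowerSeriesOnBall hr0
  have hy' : y ∈ Metric.eball (0:ℂ) r := by
    rw [Metric.emetric_ball_nnreal]
    exact Metric.mem_ball.mpr (by simpa using hyr)
  have hs := hp.hasSum_iteratedFDeriv hy'
  simp only [zero_add] at hs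
  convert hs using 2 with n
  · rfl
  rw [iteratedFDeriv_apply_eq_iteratedDeriv_mul_prod]
  have h01 : (0:ℂ).re < 1 := by norm_num
  rw [iteratedDeriv_gfun α n h01]
  have : gfun α n 0 = ∏ k ∈ Finset.range n, ((α : ℂ) + k) := by
    simp [gfun]
  rw [this]
  push_cast
  simp [smul_eq_mul, Finset.prod_const]
  ring

lemma gamma_prod (α : ℝ) (hα : 0 < α) (m : ℕ) :
    Real.Gamma ((m : ℝ) + α) = (∏ k ∈ Finset.range m, (α + k)) * Real.Gamma α := by
  induction m with
  | zero => simp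
  | succ m ih =>
    have hpos : (0:ℝ) < (m:ℝ) + α := by positivity
    have h1 : ((m + 1 : ℕ) : ℝ) + α = ((m : ℝ) + α) + 1 := by push_cast; ring
    rw [h1, Real.Gamma_add_one (ne_of_gt hpos), ih, Finset.prod_range_succ]
    ring

/-- Z-transform of the subsequence `n ↦ φ̃_α(3n+4)` for `0 < α ≤ 1`, `z > 1`,
with `ω = exp(2πi/3)`:
`∑ₙ Γ(3n+4+α)/(Γ(α)·Γ(3n+5))·z^(-n)
  = (z^(4/3)/3)·((1-z^(-1/3))^(-α) + ω²·(1-ω·z^(-1/3))^(-α) + ω·(1-ω²·z^(-1/3))^(-α)) - z·α`,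
the sum of real terms being taken in `ℂ`, so in particular the RHS is real. -/
theorem ztransform_phi_mod3_4 (α : ℝ) (hα : 0 < α) (hα' : α ≤ 1) (z : ℝ) (hz : 1 < z)
    (ω : ℂ) (hω : ω = Complex.exp (2 * (Real.pi : ℂ) * Complex.I / 3)) :
    HasSum (fun n : ℕ =>
        ((Real.Gamma (3 * (n : ℝ) + 4 + α) /
            (Real.Gamma α * Real.Gamma (3 * (n : ℝ) + 5)) * z ^ (-(n : ℝ)) : ℝ) : ℂ))
      ((((z ^ ((4 / 3 : ℝ)) : ℝ) : ℂ) / 3) *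
        ((1 - ((z ^ (-(1 / 3 : ℝ)) : ℝ) : ℂ)) ^ ((-α : ℝ) : ℂ)
          + ω ^ 2 * (1 - ω * ((z ^ (-(1 / 3 : ℝ)) : ℝ) : ℂ)) ^ ((-α : ℝ) : ℂ)
          + ω * (1 - ω ^ 2 * ((z ^ (-(1 / 3 : ℝ)) : ℝ) : ℂ)) ^ ((-α : ℝ) : ℂ))
        - (z : ℂ) * (α : ℂ)) := by
  have hz0 : (0:ℝ) < z := lt_trans one_pos hz
  set x : ℝ := z ^ (-(1 / 3 : ℝ)) with hxdef
  have hx0 : 0 < x := Real.rpow_pos_of_pos hz0 _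
  have hx1 : x < 1 := Real.rpow_lt_one_of_one_lt_of_neg hz (by norm_num)
  -- ω facts
  have hωeq : ω = Complex.exp (((2 * Real.pi / 3 : ℝ) : ℂ) * Complex.I) := by
    rw [hω]; congr 1; push_cast; ring
  have hω3 : ω ^ 3 = 1 := by
    rw [hωeq, ← Complex.exp_nat_mul]
    rw [show ((3:ℕ):ℂ) * (((2 * Real.pi / 3 : ℝ) : ℂ) * Complex.I) = 2 * Real.pi * Complex.I by
      push_cast; ring]
    exact Complex.exp_two_pi_mul_I
  have hωabs : ‖ω‖ = 1 := by
    rw [hωeq, Complex.norm_exp_ofReal_mul_I]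
  have hωne : ω ≠ 1 := by
    intro h
    have him : ω.im = Real.sin (2 * Real.pi / 3) := by
      rw [hωeq, Complex.exp_ofReal_mul_I_im]
    have hsin : 0 < Real.sin (2 * Real.pi / 3) := by
      apply Real.sin_pos_of_pos_of_lt_pi
      · positivity
      · nlinarith [Real.pi_pos]
    rw [h] at him
    simp at him
    linarith [him ▸ hsin]
  have hωsum : 1 + ω + ω ^ 2 = 0 := by
    have h : (ω - 1) * (1 + ω + ω ^ 2) = 0 := by linear_combination hω3
    rcases mul_eq_zero.mp h with h' | h'
    · exact absurd (sub_eq_zero.mp h') hωne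
    · exact h'
  -- the three binomial sums
  set c : ℕ → ℝ := fun m => (∏ k ∈ Finset.range m, (α + k)) / m.factorial with hcdef
  have hnorm : ∀ j : ℕ, ‖ω ^ j * (x:ℂ)‖ < 1 := by
    intro j
    rw [norm_mul, norm_pow, hωabs, one_pow, one_mul, Complex.norm_real,
      Real.norm_of_nonneg hx0.le]
    exact hx1
  have S0 := binom_hasSum_s14 α (y := (x:ℂ)) (by
    rw [Complex.norm_real, Real.norm_of_nonneg hx0.le]; exact hx1)
  have S1 := binom_hasSum_s14 α (y := ω * (x:ℂ)) (by simpa using hnorm 1)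
  have S2 := binom_hasSum_s14 α (y := ω ^ 2 * (x:ℂ)) (hnorm 2)
  have hsum := ((S0.add (S1.mul_left (ω ^ 2))).add (S2.mul_left ω)).div_const 3
  set T : ℂ := ((1 - (x:ℂ)) ^ (-(α:ℂ)) + ω ^ 2 * (1 - ω * (x:ℂ)) ^ (-(α:ℂ))
      + ω * (1 - ω ^ 2 * (x:ℂ)) ^ (-(α:ℂ))) / 3 with hTdef
  -- filter to m ≡ 1 mod 3
  set F : ℕ → ℂ := fun m => if m % 3 = 1 then ((c m : ℝ) : ℂ) * (x:ℂ) ^ m else 0 with hFdef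
  have hωm : ∀ m : ℕ, ω ^ m = ω ^ (m % 3) := by
    intro m
    conv_lhs => rw [← Nat.div_add_mod m 3]
    rw [pow_add, pow_mul, hω3, one_pow, one_mul]
  have hfun : (fun m : ℕ => (((c m : ℝ):ℂ) * (x:ℂ) ^ m + ω ^ 2 * (((c m : ℝ):ℂ) * (ω * (x:ℂ)) ^ m)
      + ω * (((c m : ℝ):ℂ) * (ω ^ 2 * (x:ℂ)) ^ m)) / 3) = F := by
    funext m
    have h1 : (ω * (x:ℂ)) ^ m = ω ^ m * (x:ℂ) ^ m := mul_pow _ _ _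
    have h2 : (ω ^ 2 * (x:ℂ)) ^ m = (ω ^ m) ^ 2 * (x:ℂ) ^ m := by
      rw [mul_pow, ← pow_mul, ← pow_mul, mul_comm 2 m]
    rw [h1, h2, hωm m]
    rcases (show m % 3 = 0 ∨ m % 3 = 1 ∨ m % 3 = 2 by omega) with h | h | h
    · have h0 : F m = 0 := by simp [hFdef, h]
      rw [h, h0]
      linear_combination (((c m : ℝ):ℂ) * (x:ℂ) ^ m / 3) * hωsum
    · have h0 : F m = ((c m : ℝ):ℂ) * (x:ℂ) ^ m := by simp [hFdef, h]
      rw [h, h0]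
      linear_combination (2 / 3 * ((c m : ℝ):ℂ) * (x:ℂ) ^ m) * hω3
    · have h0 : F m = 0 := by simp [hFdef, h]
      rw [h, h0]
      linear_combination (((c m : ℝ):ℂ) * (x:ℂ) ^ m / 3) * hωsum
        + (((c m : ℝ):ℂ) * (x:ℂ) ^ m / 3) * (ω + ω ^ 2) * hω3
  rw [hfun] at hsum
  -- hsum : HasSum F T
  have hinj : Function.Injective (fun n : ℕ => 3 * n + 1) := by
    intro a b h
    have h2 : 3 * a + 1 = 3 * b + 1 := h
    omega
  have hsupp : ∀ m ∉ Set.range (fun n : ℕ => 3 * n + 1), F m = 0 := by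
    intro m hm
    have : m % 3 ≠ 1 := by
      intro h
      exact hm ⟨m / 3, by show 3 * (m / 3) + 1 = m; omega⟩
    simp [hFdef, this]
  have hsum2 : HasSum (F ∘ fun n : ℕ => 3 * n + 1) T := (hinj.hasSum_iff hsupp).mpr hsum
  have hshift : HasSum (fun n : ℕ => (F ∘ fun n : ℕ => 3 * n + 1) (n + 1))
      (T - (F ∘ fun n : ℕ => 3 * n + 1) 0) := by
    rw [hasSum_nat_add_iff 1]
    simpa using hsum2
  have hfin := hshift.mul_left (((z ^ ((4 / 3 : ℝ)) : ℝ) : ℂ))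
  convert hfin using 1
  · rfl
  · -- function equality
    funext n
    have he : 3 * (n + 1) + 1 = 3 * n + 4 := by omega
    have hmod : (3 * n + 4) % 3 = 1 := by omega
    simp only [Function.comp, he, hFdef, hmod, if_pos]
    -- real-side computation
    have hΓ1 : Real.Gamma (3 * (n : ℝ) + 4 + α)
        = (∏ k ∈ Finset.range (3 * n + 4), (α + k)) * Real.Gamma α := by
      rw [show 3 * (n : ℝ) + 4 + α = ((3 * n + 4 : ℕ) : ℝ) + α by push_cast; ring]
      exact gamma_prod α hα _
    have hΓ2 : Real.Gamma (3 * (n : ℝ) + 5) = ((3 * n + 4).factorial : ℝ) := by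
      rw [show 3 * (n : ℝ) + 5 = ((3 * n + 4 : ℕ) : ℝ) + 1 by push_cast; ring]
      exact Real.Gamma_nat_eq_factorial _
    have hΓα : Real.Gamma α ≠ 0 := ne_of_gt (Real.Gamma_pos_of_pos hα)
    have hfac : ((3 * n + 4).factorial : ℝ) ≠ 0 := by positivity
    have hreal : Real.Gamma (3 * (n : ℝ) + 4 + α) / (Real.Gamma α * Real.Gamma (3 * (n : ℝ) + 5))
        * z ^ (-(n : ℝ)) = z ^ ((4 / 3 : ℝ)) * (c (3 * n + 4) * x ^ (3 * n + 4)) := by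
      rw [hΓ1, hΓ2, hcdef]
      have hpow : x ^ (3 * n + 4) = z ^ ((-(1/3 : ℝ)) * ((3 * n + 4 : ℕ) : ℝ)) := by
        rw [hxdef, Real.rpow_mul hz0.le, Real.rpow_natCast]
      have hz1 : z ^ ((4 / 3 : ℝ)) * z ^ ((-(1/3 : ℝ)) * ((3 * n + 4 : ℕ) : ℝ))
          = z ^ (-(n : ℝ)) := by
        rw [← Real.rpow_add hz0]
        congr 1
        push_cast; ring
      rw [hpow,
        show z ^ ((4 / 3 : ℝ)) * ((∏ k ∈ Finset.range (3 * n + 4), (α + (k:ℝ))) /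
              ((3 * n + 4).factorial : ℝ) * z ^ ((-(1/3 : ℝ)) * ((3 * n + 4 : ℕ) : ℝ)))
            = (∏ k ∈ Finset.range (3 * n + 4), (α + (k:ℝ))) / ((3 * n + 4).factorial : ℝ)
              * z ^ (-(n : ℝ)) by rw [← hz1]; ring]
      field_simp
    rw [hreal]
    push_cast
    ring
  · -- value equality
    have hG0 : (F ∘ fun n : ℕ => 3 * n + 1) 0 = (α : ℂ) * (x : ℂ) := by
      simp [hFdef, hcdef]
    have hzx : z ^ ((4 / 3 : ℝ)) * x = z := by
      rw [hxdef, ← Real.rpow_add hz0, show (4 / 3 : ℝ) + -(1/3) = 1 by norm_num,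
        Real.rpow_one]
    have hzxC : ((z ^ ((4 / 3 : ℝ)) : ℝ) : ℂ) * (x : ℂ) = (z : ℂ) := by
      exact_mod_cast congrArg Complex.ofReal hzx
    rw [hG0, hTdef]
    push_cast
    linear_combination (α : ℂ) * hzxC
end
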